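/- arXiv:1311.0655 — 5 statements merged into one kernel-verified Lean document; each statement's English description precedes it below -/
import Mathlib

section
/- Let ρ > 1 be a real number and let z ∈ ℂ with Im(z) ≠ 0. Then ∫_ℝ e^{it}/(t − z)^ρ dt = (2π e^{iπρ/2}/Γ(ρ)) · e^{iz} if Im(z) > 0, and ∫_ℝ e^{it}/(t − z)^ρ dt = 0 if Im(z) < 0. -/
open scoped Real MatrixGroups
open Filter MeasureTheory UpperHalfPlane

noncomputable section

/-- Iterates of the Gauss map: `cfX x n` is the `n`-th complete quotient of `x`. -/
def cfX (x : ℝ) : ℕ → ℝ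
  | 0 => x
  | n+1 => 1 / (cfX x n - ⌊cfX x n⌋)

/-- The partial quotients `a_n` of the continued fraction expansion of `x`. -/
def cfa (x : ℝ) (n : ℕ) : ℤ := ⌊cfX x n⌋

/-- Numerators `p_n` of the continued fraction convergents of `x`. -/
def cfp (x : ℝ) : ℕ → ℤ
  | 0 => cfa x 0
  | 1 => cfa x 1 * cfa x 0 + 1
  | n+2 => cfa x (n+2) * cfp x (n+1) + cfp x n

/-- Denominators `q_n` of the continued fraction convergents of `x`. -/
def cfq (x : ℝ) : ℕ → ℤ
  | 0 => 1
  | 1 => cfa x 1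
  | n+2 => cfa x (n+2) * cfq x (n+1) + cfq x n

/-- `κ_n`, defined by `|x - p_n/q_n| = q_n ^ (-κ_n)`. -/
def kappa (x : ℝ) (n : ℕ) : ℝ :=
  -Real.log |x - (cfp x n : ℝ) / (cfq x n : ℝ)| / Real.log (cfq x n)

/-- `μ(x) = limsup κ_n`, as an extended real number. -/
def mu (x : ℝ) : EReal := Filter.limsup (fun n => ((kappa x n : ℝ) : EReal)) Filter.atTop

/-- `ν(x) = liminf κ_n`, as an extended real number. -/
def nu (x : ℝ) : EReal := Filter.liminf (fun n => ((kappa x n : ℝ) : EReal)) Filter.atTop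

/-- The real inverse of an extended real number, with the convention `1/∞ = 0`. -/
def invE (m : EReal) : ℝ := if m = ⊤ then 0 else 1 / m.toReal

/-- `f ∈ C^α(x₀)`: there are a polynomial `P` of degree at most `⌊α⌋` and a constant `C > 0`
with `|f x - P (x - x₀)| ≤ C * |x - x₀| ^ α` near `x₀`. -/
def HolderAt (f : ℝ → ℝ) (α : ℝ) (x₀ : ℝ) : Prop :=
  ∃ (P : Polynomial ℝ) (C : ℝ), 0 < C ∧ (P.natDegree : ℤ) ≤ ⌊α⌋ ∧
    ∀ᶠ x in nhds x₀, |f x - P.eval (x - x₀)| ≤ C * |x - x₀| ^ α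

/-- The Hölder regularity exponent of `f` at `x₀`. -/
def holderExponent (f : ℝ → ℝ) (x₀ : ℝ) : ℝ :=
  sSup {β : ℝ | 0 < β ∧ HolderAt f β x₀}

/-- The series `M_{k,s}(x) = Σ_{n≥1} (r_n / n^s) sin(2πnx)`. -/
def Mks (r : ℕ → ℝ) (s : ℝ) (x : ℝ) : ℝ :=
  ∑' n : ℕ, r (n+1) / ((n+1 : ℝ)) ^ s * Real.sin (2 * π * (n+1) * x)

/-- The point `b + i a` of the upper half-plane (for `a > 0`). -/
def mkH (b a : ℝ) (ha : 0 < a) : ℍ := ⟨⟨b, a⟩, ha⟩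

/-- The wavelet `ψ_s(t) = (t + i)^{-(s+1)}` (principal branch). -/
def psiW (s : ℝ) (t : ℝ) : ℂ := ((t : ℂ) + Complex.I) ^ (-(s+1) : ℂ)

/-- The wavelet transform `C(a,b)(f) = a⁻¹ ∫ f(t) conj(ψ_s((t-b)/a)) dt`. -/
def waveletT (s : ℝ) (f : ℝ → ℝ) (a b : ℝ) : ℂ :=
  (1/a : ℂ) * ∫ t : ℝ, (f t : ℂ) * (starRingEnd ℂ) (psiW s ((t - b)/a))

/-- The Fourier transform `ĝ(ξ) = ∫ g(x) e^{-ixξ} dx`. -/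
def fourierT (g : ℝ → ℂ) (ξ : ℝ) : ℂ := ∫ x : ℝ, g x * Complex.exp (-(Complex.I * x * ξ))

/-- The sum-of-divisors function `σ₁`. -/
def sigma1 (n : ℕ) : ℕ := ∑ d ∈ n.divisors, d

/-- The constant `Ĉ = (2π)^s ⬝ π e^{iπs/2} / Γ(s+1)`. -/
def Chat (s : ℝ) : ℂ :=
  (((2*π : ℝ) ^ s : ℝ) : ℂ) * ((π : ℂ) * Complex.exp ((π : ℂ) * Complex.I * s / 2) /
    Complex.Gamma ((s : ℂ) + 1))

/-- The series `E_{2,s}(x) = Σ_{n≥1} (σ₁(n)/n^s) sin(2πnx)`. -/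
def E2s (s : ℝ) (x : ℝ) : ℝ :=
  ∑' n : ℕ, (sigma1 (n+1) : ℝ) / ((n+1 : ℝ)) ^ s * Real.sin (2 * π * (n+1) * x)

section helpers
open MeasureTheory Set Complex Filter FourierTransform

lemma myRayMeas (ρ : ℝ) (w : ℂ) :
    AEStronglyMeasurable (fun t : ℝ => Complex.exp (-(w * t)) * (t : ℂ) ^ ((ρ : ℂ) - 1))
      (volume.restrict (Ioi 0)) := by
  refine (ContinuousOn.mul ?_ ?_).aestronglyMeasurable measurableSet_Ioi
  · exact (Continuous.comp Complex.continuous_exp (by continuity)).continuousOn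
  · intro x hx
    exact (continuousAt_ofReal_cpow_const _ _ (Or.inr (ne_of_gt hx))).continuousWithinAt

lemma myRayIntegrable {ρ : ℝ} (hρ : 0 < ρ) {w : ℂ} (hw : 0 < w.re) :
    IntegrableOn (fun t : ℝ => Complex.exp (-(w * t)) * (t : ℂ) ^ ((ρ : ℂ) - 1)) (Ioi 0) := by
  have h1 : IntegrableOn (fun x : ℝ => Real.exp (-x) * x ^ (ρ - 1)) (Ioi 0) :=
    Real.GammaIntegral_convergent hρ
  have h2 : IntegrableOn (fun x : ℝ => Real.exp (-(w.re * x)) * (w.re * x) ^ (ρ - 1)) (Ioi 0) := by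
    have := (integrableOn_Ioi_comp_mul_left_iff (fun x : ℝ => Real.exp (-x) * x ^ (ρ - 1)) 0 hw).mpr
    simpa using this (by simpa using h1)
  have h3 : IntegrableOn (fun x : ℝ => Real.exp (-(w.re * x)) * x ^ (ρ - 1)) (Ioi 0) := by
    have h2' : IntegrableOn
        (fun x : ℝ => w.re ^ (1 - ρ) * (Real.exp (-(w.re * x)) * (w.re * x) ^ (ρ - 1)))
        (Ioi 0) := h2.const_mul _
    refine h2'.congr_fun (fun x hx => ?_) measurableSet_Ioi
    have hx0 : (0:ℝ) < x := hx
    beta_reduce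
    rw [Real.mul_rpow hw.le hx0.le, ← mul_assoc, mul_comm (w.re ^ (1-ρ)), mul_assoc,
      ← mul_assoc (w.re ^ (1-ρ)), ← Real.rpow_add hw]
    norm_num
  refine ⟨myRayMeas ρ w, ?_⟩
  refine HasFiniteIntegral.mono' h3.2 ?_
  filter_upwards [ae_restrict_mem measurableSet_Ioi] with t ht
  rw [norm_mul, Complex.norm_exp,
    Complex.norm_cpow_eq_rpow_re_of_pos ht]
  simp [Complex.mul_re]

section ray
open Complex

lemma myDeriv {ρ : ℝ} (hρ : 0 < ρ) {a₀ : ℂ} (ha : 0 < a₀.re) :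
    DifferentiableAt ℂ
      (fun a : ℂ => ∫ t : ℝ in Ioi 0, Complex.exp (-(a * t)) * (t : ℂ) ^ ((ρ : ℂ) - 1)) a₀ := by
  set F' : ℂ → ℝ → ℂ := fun a t =>
    Complex.exp (-(a * t)) * (-(t : ℂ)) * (t : ℂ) ^ ((ρ : ℂ) - 1) with hF'
  have hε : (0:ℝ) < a₀.re / 2 := by linarith
  have hbd : IntegrableOn
      (fun t : ℝ => Real.exp (-(a₀.re/2 * t)) * t ^ ((ρ+1) - 1)) (Ioi 0) := by
    have h : IntegrableOn (fun t : ℝ =>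
        ‖Complex.exp (-(((a₀.re/2 : ℝ) : ℂ) * t)) * (t : ℂ) ^ (((ρ+1 : ℝ) : ℂ) - 1)‖) (Ioi 0) :=
      (myRayIntegrable (by linarith : (0:ℝ) < ρ + 1)
        (w := ((a₀.re/2 : ℝ) : ℂ)) (by simpa using hε)).norm
    refine h.congr_fun (fun t ht => ?_) measurableSet_Ioi
    have ht0 : (0:ℝ) < t := ht
    beta_reduce
    rw [norm_mul, Complex.norm_exp,
      Complex.norm_cpow_eq_rpow_re_of_pos ht0]
    push_cast
    simp [Complex.mul_re]
  have key := hasDerivAt_integral_of_dominated_loc_of_deriv_le (F' := F')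
    (μ := volume.restrict (Ioi 0))
    (F := fun (a : ℂ) (t : ℝ) => Complex.exp (-(a * t)) * (t : ℂ) ^ ((ρ : ℂ) - 1))
    (x₀ := a₀) (bound := fun t => Real.exp (-(a₀.re/2 * t)) * t ^ ((ρ+1) - 1))
    (Metric.ball_mem_nhds a₀ hε) (Eventually.of_forall fun a => myRayMeas ρ a) (myRayIntegrable hρ ha)
    ?_ ?_ hbd ?_
  · exact key.2.differentiableAt
  · -- measurability of F' a₀
    refine (ContinuousOn.mul (Continuous.continuousOn ?_) ?_).aestronglyMeasurable
      measurableSet_Ioi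
    · exact (Complex.continuous_exp.comp (by continuity)).mul (by continuity)
    · exact fun x hx =>
        (continuousAt_ofReal_cpow_const _ _ (Or.inr (ne_of_gt hx))).continuousWithinAt
  · -- bound
    filter_upwards [ae_restrict_mem measurableSet_Ioi] with t ht a haB
    have ht0 : (0:ℝ) < t := ht
    have hre : a₀.re / 2 ≤ a.re := by
      have h1 : |(a - a₀).re| ≤ ‖a - a₀‖ := Complex.abs_re_le_norm _
      have h2 : ‖a - a₀‖ < a₀.re / 2 := by
        rw [← Complex.dist_eq]; simpa [Metric.mem_ball, dist_comm] using haB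
      have := abs_le.mp (h1.trans h2.le)
      simp only [Complex.sub_re] at this
      linarith [this.1]
    rw [hF']
    rw [norm_mul, norm_mul,
      Complex.norm_exp, Complex.norm_cpow_eq_rpow_re_of_pos ht0]
    have : ‖(-(t:ℂ))‖ = t := by
      simp [abs_of_pos ht0]
    rw [this]
    have hexp : Real.exp ((-(a * t)).re) ≤ Real.exp (-(a₀.re/2 * t)) := by
      apply Real.exp_le_exp.mpr
      simp only [Complex.neg_re, Complex.mul_re, Complex.ofReal_re, Complex.ofReal_im,
        mul_zero, sub_zero]
      nlinarith
    calc Real.exp ((-(a * t)).re) * t * t ^ (((ρ:ℂ) - 1).re)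
        ≤ Real.exp (-(a₀.re/2 * t)) * t * t ^ (((ρ:ℂ) - 1).re) := by
          have hp : (0:ℝ) ≤ t ^ (((ρ:ℂ) - 1).re) := Real.rpow_nonneg ht0.le _
          exact mul_le_mul_of_nonneg_right
            (mul_le_mul_of_nonneg_right hexp ht0.le) hp
      _ = Real.exp (-(a₀.re/2 * t)) * t ^ ((ρ+1) - 1) := by
          rw [mul_assoc]
          congr 1
          rw [show (((ρ:ℂ) - 1).re) = ρ - 1 by simp]
          nth_rewrite 1 [show t = t ^ (1:ℝ) by simp]
          rw [← Real.rpow_add ht0]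
          ring_nf
  · -- differentiability in a
    filter_upwards [ae_restrict_mem measurableSet_Ioi] with t ht a haB
    have h1 : HasDerivAt (fun a : ℂ => -(a * (t:ℂ))) (-(t:ℂ)) a := by
      exact (hasDerivAt_mul_const (t:ℂ)).neg
    exact (h1.cexp.mul_const _)

lemma myRayIntegral {ρ : ℝ} (hρ : 0 < ρ) {w : ℂ} (hw : 0 < w.re) :
    ∫ t : ℝ in Ioi 0, Complex.exp (-(w * t)) * (t : ℂ) ^ ((ρ : ℂ) - 1)
      = Complex.Gamma ρ / w ^ (ρ : ℂ) := by
  set G : ℂ → ℂ := fun a => ∫ t : ℝ in Ioi 0, Complex.exp (-(a * t)) * (t : ℂ) ^ ((ρ : ℂ) - 1)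
    with hGdef
  set H : ℂ → ℂ := fun a => Complex.Gamma ρ * a ^ (-(ρ:ℂ)) with hHdef
  set U : Set ℂ := {a : ℂ | 0 < a.re} with hUdef
  have hUo : IsOpen U := isOpen_lt continuous_const Complex.continuous_re
  have hG : AnalyticOnNhd ℂ G U :=
    DifferentiableOn.analyticOnNhd
      (fun a ha => (myDeriv hρ ha).differentiableWithinAt) hUo
  have hH : AnalyticOnNhd ℂ H U := by
    refine DifferentiableOn.analyticOnNhd (fun a ha => ?_) hUo
    exact ((differentiableAt_id.cpow (differentiableAt_const _)
      (Or.inl ha)).const_mul _).differentiableWithinAt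
  have heq : ∀ r : ℝ, 0 < r → G ((r:ℝ):ℂ) = H ((r:ℝ):ℂ) := by
    intro r hr
    have hv := integral_cpow_mul_exp_neg_mul_Ioi
      (a := (ρ:ℂ)) (r := r) (by simpa using hρ) hr
    rw [hGdef, hHdef]
    simp only
    calc (∫ t : ℝ in Ioi 0, Complex.exp (-((r:ℂ) * t)) * (t : ℂ) ^ ((ρ : ℂ) - 1))
        = ∫ t : ℝ in Ioi 0, (t : ℂ) ^ ((ρ : ℂ) - 1) * Complex.exp (-((r:ℂ) * t)) := by
          congr 1; ext t; ring
      _ = (1 / (r:ℂ)) ^ (ρ:ℂ) * Complex.Gamma ρ := hv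
      _ = Complex.Gamma ρ * ((r:ℝ):ℂ) ^ (-(ρ:ℂ)) := by
          rw [mul_comm, one_div, inv_cpow, ← cpow_neg]
          rw [Complex.arg_ofReal_of_nonneg hr.le]
          exact Real.pi_ne_zero.symm
  have hfreq : ∃ᶠ z in nhdsWithin (1:ℂ) {(1:ℂ)}ᶜ, G z = H z := by
    have hseq : Tendsto (fun n : ℕ => (((1 + (n:ℝ)⁻¹ : ℝ)) : ℂ)) atTop
        (nhdsWithin (1:ℂ) {(1:ℂ)}ᶜ) := by
      apply tendsto_nhdsWithin_of_tendsto_nhds_of_eventually_within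
      · have h0 : Tendsto (fun n : ℕ => (1 + (n:ℝ)⁻¹)) atTop (nhds 1) := by
          simpa using tendsto_const_nhds.add (tendsto_inv_atTop_nhds_zero_nat (𝕜 := ℝ))
        have h1 := (Complex.continuous_ofReal.tendsto (1:ℝ)).comp h0
        rw [show ((1:ℝ):ℂ) = 1 by norm_num] at h1
        exact h1
      · filter_upwards [eventually_ge_atTop 1] with n hn
        have : (0:ℝ) < (n:ℝ)⁻¹ := by positivity
        simp only [Set.mem_compl_iff, Set.mem_singleton_iff]
        intro hcon
        have : ((1 + (n:ℝ)⁻¹ : ℝ)) = 1 := by exact_mod_cast hcon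
        linarith
    exact hseq.frequently (Frequently.of_forall fun n => heq _ (by positivity))
  have hEq : Set.EqOn G H U :=
    hG.eqOn_of_preconnected_of_frequently_eq hH
      ((convex_halfSpace_re_gt (r := 0)).isPreconnected) (by simp [hUdef]) hfreq
  have := hEq (show w ∈ U from hw)
  rw [hGdef, hHdef] at this
  simp only at this
  rw [this, cpow_neg, div_eq_mul_inv]

end ray

section pieces
open Complex

lemma myMulCpow {x y : ℂ} (hx : x ≠ 0) (hy : y ≠ 0)
    (h : Complex.arg x + Complex.arg y ∈ Set.Ioc (-π) π) (c : ℂ) :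
    (x * y) ^ c = x ^ c * y ^ c := by
  rw [Complex.cpow_def_of_ne_zero (mul_ne_zero hx hy), Complex.cpow_def_of_ne_zero hx,
    Complex.cpow_def_of_ne_zero hy, Complex.log_mul hx hy h, add_mul, Complex.exp_add]

lemma myLower {w : ℂ} (hw : 0 < w.re) :
    ∃ c > 0, ∀ s : ℝ, c * (1 + |s|) ≤ ‖w + 2 * π * s * Complex.I‖ := by
  set M : ℝ := max 1 (‖w‖ / π) with hM
  have hM1 : (1:ℝ) ≤ M := le_max_left _ _
  refine ⟨min (w.re / (1 + M)) (π / 2), ?_, ?_⟩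
  · apply lt_min
    · positivity
    · positivity
  · intro s
    have habs : ∀ u : ℂ, u.re ≤ ‖u‖ := fun u => (Complex.abs_re_le_norm u).trans'
      (le_abs_self _) |>.trans le_rfl
    rcases le_or_gt |s| M with hsM | hsM
    · have h1 : w.re ≤ ‖w + 2 * π * s * Complex.I‖ := by
        have : (w + 2 * π * s * Complex.I).re = w.re := by simp
        rw [← this]
        exact (le_abs_self _).trans (Complex.abs_re_le_norm _)
      calc min (w.re / (1 + M)) (π / 2) * (1 + |s|)
          ≤ (w.re / (1 + M)) * (1 + M) := by
            apply mul_le_mul (min_le_left _ _) (by linarith) (by positivity) (by positivity)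
        _ = w.re := by field_simp
        _ ≤ _ := h1
    · have hs1 : (1:ℝ) ≤ |s| := hM1.trans hsM.le
      have hzw : ‖w‖ ≤ π * |s| := by
        have : ‖w‖ / π ≤ M := le_max_right _ _
        have h2 : ‖w‖ / π ≤ |s| := this.trans hsM.le
        calc ‖w‖ = (‖w‖ / π) * π := by field_simp
          _ ≤ |s| * π := by
              apply mul_le_mul_of_nonneg_right h2 Real.pi_pos.le
          _ = π * |s| := mul_comm _ _
      have h3 : 2 * π * |s| - ‖w‖ ≤ ‖w + 2 * π * s * Complex.I‖ := by
        have h4 : ‖2 * π * s * Complex.I‖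
            ≤ ‖w + 2 * π * s * Complex.I‖ + ‖w‖ := by
          calc ‖2 * π * s * Complex.I‖
              = ‖(w + 2 * π * s * Complex.I) + (-w)‖ := by ring_nf
            _ ≤ ‖w + 2 * π * s * Complex.I‖ + ‖-w‖ :=
                norm_add_le _ _
            _ = ‖w + 2 * π * s * Complex.I‖ + ‖w‖ := by
                rw [norm_neg]
        have h5 : ‖2 * π * s * Complex.I‖ = 2 * π * |s| := by
          rw [norm_mul, norm_mul, norm_mul]
          simp [abs_of_pos Real.pi_pos]
        rw [h5] at h4
        linarith
      calc min (w.re / (1 + M)) (π / 2) * (1 + |s|)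
          ≤ (π / 2) * (1 + |s|) := by
            apply mul_le_mul_of_nonneg_right (min_le_right _ _) (by positivity)
        _ ≤ (π / 2) * (2 * |s|) := by
            apply mul_le_mul_of_nonneg_left (by linarith) (by positivity)
        _ = 2 * π * |s| - π * |s| := by ring
        _ ≤ 2 * π * |s| - ‖w‖ := by linarith
        _ ≤ _ := h3

end pieces

section fourier
open Complex FourierTransform

lemma myFourierG {ρ : ℝ} (hρ : 0 < ρ) {w : ℂ} (hw : 0 < w.re) (s : ℝ) :
    𝓕 (Set.indicator (Ioi 0) (fun u : ℝ => Complex.exp (-(w * u)) * (u : ℂ) ^ ((ρ : ℂ) - 1))) s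
      = Complex.Gamma ρ / (w + 2 * π * s * Complex.I) ^ (ρ : ℂ) := by
  rw [Real.fourier_real_eq_integral_exp_smul]
  have hstep : ∀ v : ℝ, Complex.exp (↑(-2 * π * v * s) * Complex.I) •
      (Set.indicator (Ioi 0) (fun u : ℝ => Complex.exp (-(w * u)) * (u : ℂ) ^ ((ρ : ℂ) - 1)) v)
      = Set.indicator (Ioi 0) (fun u : ℝ => Complex.exp (↑(-2 * π * u * s) * Complex.I) *
          (Complex.exp (-(w * u)) * (u : ℂ) ^ ((ρ : ℂ) - 1))) v := by
    intro v
    by_cases hv : v ∈ Ioi 0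
    · simp [Set.indicator_of_mem hv, smul_eq_mul]
    · simp [Set.indicator_of_notMem hv]
  simp_rw [hstep]
  rw [integral_indicator measurableSet_Ioi]
  have hcongr : ∀ u ∈ Ioi (0:ℝ),
      Complex.exp (↑(-2 * π * u * s) * Complex.I) *
        (Complex.exp (-(w * u)) * (u : ℂ) ^ ((ρ : ℂ) - 1))
      = Complex.exp (-((w + 2 * π * s * Complex.I) * u)) * (u : ℂ) ^ ((ρ : ℂ) - 1) := by
    intro u _
    rw [← mul_assoc, ← Complex.exp_add]
    congr 2
    push_cast
    ring
  rw [setIntegral_congr_fun measurableSet_Ioi hcongr]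
  exact myRayIntegral hρ (by simpa using hw)

lemma myGint {ρ : ℝ} (hρ : 0 < ρ) {w : ℂ} (hw : 0 < w.re) :
    Integrable (Set.indicator (Ioi 0)
      (fun u : ℝ => Complex.exp (-(w * u)) * (u : ℂ) ^ ((ρ : ℂ) - 1))) :=
  (myRayIntegrable hρ hw).integrable_indicator measurableSet_Ioi

lemma myFhatCont {ρ : ℝ} {w : ℂ} (hw : 0 < w.re) :
    Continuous (fun s : ℝ => Complex.Gamma ρ / (w + 2 * π * s * Complex.I) ^ (ρ : ℂ)) := by
  rw [continuous_iff_continuousAt]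
  intro s
  have hbase : ContinuousAt (fun s : ℝ => w + 2 * π * s * Complex.I) s := by fun_prop
  have hmem : (w + 2 * π * s * Complex.I) ∈ Complex.slitPlane := Or.inl (by simpa using hw)
  have hne : (w + 2 * π * s * Complex.I) ^ (ρ:ℂ) ≠ 0 := by
    intro h
    rcases (Complex.cpow_eq_zero_iff _ _).mp h with ⟨h0, -⟩
    rw [h0] at hmem
    simpa using hmem
  have hpow : ContinuousAt (fun s : ℝ => (w + 2 * π * s * Complex.I) ^ (ρ:ℂ)) s :=
    hbase.cpow continuousAt_const hmem
  exact continuousAt_const.div hpow hne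

lemma myFhatInt {ρ : ℝ} (hρ : 1 < ρ) {w : ℂ} (hw : 0 < w.re) :
    Integrable (fun s : ℝ => Complex.Gamma ρ / (w + 2 * π * s * Complex.I) ^ (ρ : ℂ)) := by
  obtain ⟨c, hc, hbound⟩ := myLower hw
  have hρ0 : (0:ℝ) < ρ := by linarith
  have hne : ∀ s : ℝ, w + 2 * π * s * Complex.I ≠ 0 := by
    intro s h
    have := hbound s
    rw [h] at this
    simp only [norm_zero] at this
    nlinarith [abs_nonneg s]
  refine Integrable.mono'
    ((integrable_one_add_norm (E := ℝ) (by simpa using hρ)).const_mul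
      (‖Complex.Gamma (ρ:ℂ)‖ * c ^ (-ρ)))
    (myFhatCont hw).aestronglyMeasurable ?_
  filter_upwards with s
  have habs : ‖(w + 2 * π * s * Complex.I) ^ (ρ:ℂ)‖
      = ‖w + 2 * π * s * Complex.I‖ ^ ρ := by
    rw [Complex.norm_cpow_of_ne_zero (hne s)]
    simp
  rw [norm_div, habs]
  have h1 : (c * (1 + |s|)) ^ ρ ≤ ‖w + 2 * π * s * Complex.I‖ ^ ρ :=
    Real.rpow_le_rpow (by positivity) (hbound s) hρ0.le
  have h2 : ‖Complex.Gamma (ρ:ℂ)‖ / ‖w + 2 * π * s * Complex.I‖ ^ ρ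
      ≤ ‖Complex.Gamma (ρ:ℂ)‖ / (c * (1 + |s|)) ^ ρ := by
    apply div_le_div_of_nonneg_left (norm_nonneg _) (by positivity) h1
  refine h2.trans (le_of_eq ?_)
  rw [Real.mul_rpow hc.le (by positivity), Real.rpow_neg hc.le, Real.rpow_neg (by positivity)]
  rw [Real.norm_eq_abs]
  field_simp

lemma myKey {ρ : ℝ} (hρ : 1 < ρ) {w : ℂ} (hw : 0 < w.re) (v : ℝ) (hv : v ≠ 0) :
    𝓕⁻ (fun s : ℝ => Complex.Gamma ρ / (w + 2 * π * s * Complex.I) ^ (ρ : ℂ)) v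
      = Set.indicator (Ioi 0)
          (fun u : ℝ => Complex.exp (-(w * u)) * (u : ℂ) ^ ((ρ : ℂ) - 1)) v := by
  have hρ0 : (0:ℝ) < ρ := by linarith
  have h1 : (fun s : ℝ => Complex.Gamma ρ / (w + 2 * π * s * Complex.I) ^ (ρ : ℂ))
      = 𝓕 (Set.indicator (Ioi 0)
          (fun u : ℝ => Complex.exp (-(w * u)) * (u : ℂ) ^ ((ρ : ℂ) - 1))) :=
    funext fun s => (myFourierG hρ0 hw s).symm
  rw [h1]
  refine (myGint hρ0 hw).fourierInv_fourier_eq (h1 ▸ myFhatInt hρ hw) ?_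
  rcases lt_or_gt_of_ne hv with hneg | hpos
  · have hev : Set.indicator (Ioi 0)
        (fun u : ℝ => Complex.exp (-(w * u)) * (u : ℂ) ^ ((ρ : ℂ) - 1))
        =ᶠ[nhds v] (fun _ => (0:ℂ)) := by
      filter_upwards [Iio_mem_nhds hneg] with x hx
      exact Set.indicator_of_notMem (by simpa using not_lt.mpr (le_of_lt hx)) _
    exact continuousAt_const.congr hev.symm
  · have hev : Set.indicator (Ioi 0)
        (fun u : ℝ => Complex.exp (-(w * u)) * (u : ℂ) ^ ((ρ : ℂ) - 1))
        =ᶠ[nhds v] (fun u : ℝ => Complex.exp (-(w * u)) * (u : ℂ) ^ ((ρ : ℂ) - 1)) := by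
      filter_upwards [Ioi_mem_nhds hpos] with x hx
      exact Set.indicator_of_mem hx _
    refine ContinuousAt.congr ?_ hev.symm
    exact ((Complex.continuous_exp.comp (by continuity)).continuousAt).mul
      (continuousAt_ofReal_cpow_const _ _ (Or.inr (ne_of_gt hpos)))

end fourier

section main
open Complex FourierTransform

lemma myPos {ρ : ℝ} (hρ : 1 < ρ) {z : ℂ} (him : 0 < z.im) :
    ∫ t : ℝ, Complex.exp (Complex.I * t) / ((t : ℂ) - z) ^ (ρ : ℂ)
      = 2 * (π : ℂ) * Complex.exp ((π : ℂ) * Complex.I * (ρ : ℂ) / 2) /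
          Complex.Gamma (ρ : ℂ) * Complex.exp (Complex.I * z) := by
  have hΓ : Complex.Gamma (ρ:ℂ) ≠ 0 := Complex.Gamma_ne_zero_of_re_pos (by simp; linarith)
  set w : ℂ := -(Complex.I * z) with hwdef
  have hw : 0 < w.re := by simpa [hwdef] using him
  set Fhat : ℝ → ℂ := fun s => Complex.Gamma ρ / (w + 2 * π * s * Complex.I) ^ (ρ : ℂ)
    with hFhatdef
  set F : ℝ → ℂ := fun t =>
    Complex.exp (Complex.I * t) * ((Complex.I * ((t:ℂ) - z)) ^ (ρ:ℂ))⁻¹ with hFdef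
  have hpt : ∀ t : ℝ, Complex.exp (Complex.I * t) / ((t:ℂ) - z) ^ (ρ:ℂ)
      = Complex.exp ((π:ℂ) * Complex.I * ρ / 2) * F t := by
    intro t
    have hyre : 0 < (Complex.I * ((t:ℂ) - z)).re := by
      simpa [Complex.mul_re] using him
    have hyne : Complex.I * ((t:ℂ) - z) ≠ 0 := fun h => by simp [h] at hyre
    have harg : Complex.arg (-Complex.I) + Complex.arg (Complex.I * ((t:ℂ) - z))
        ∈ Set.Ioc (-π) π := by
      rw [Complex.arg_neg_I]
      have h1 := abs_lt.mp (Complex.abs_arg_lt_pi_div_two_iff.mpr (Or.inl hyre))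
      constructor
      · linarith [Real.pi_pos, h1.1]
      · linarith [Real.pi_pos, h1.2]
    have hxy : (-Complex.I) * (Complex.I * ((t:ℂ) - z)) = (t:ℂ) - z := by
      rw [show (-Complex.I) * (Complex.I * ((t:ℂ) - z))
          = -(Complex.I * Complex.I) * ((t:ℂ) - z) by ring, Complex.I_mul_I]
      ring
    have hpow : ((t:ℂ) - z) ^ (ρ:ℂ)
        = (-Complex.I) ^ (ρ:ℂ) * (Complex.I * ((t:ℂ) - z)) ^ (ρ:ℂ) := by
      conv_lhs => rw [← hxy]
      exact myMulCpow (by simp) hyne harg _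
    have hmI : (((-Complex.I)) ^ (ρ:ℂ))⁻¹ = Complex.exp ((π:ℂ) * Complex.I * ρ / 2) := by
      rw [Complex.cpow_def_of_ne_zero (by simp), Complex.log_neg_I, ← Complex.exp_neg]
      congr 1
      push_cast
      ring
    rw [hpow, div_eq_mul_inv, mul_inv, hFdef]
    simp only
    rw [← hmI]
    ring
  simp_rw [hpt]
  rw [MeasureTheory.integral_const_mul]
  have h2 : ((2*π : ℝ)) • (∫ s : ℝ, F (2*π*s)) = ∫ t : ℝ, F t := by
    rw [MeasureTheory.Measure.integral_comp_mul_left F (2*π), smul_smul,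
      abs_of_pos (by positivity : (0:ℝ) < (2*π)⁻¹), mul_inv_cancel₀ (by positivity), one_smul]
  have hinv : 𝓕⁻ Fhat 1 = ∫ s : ℝ, Complex.exp (((2*π*s : ℝ):ℂ) * Complex.I) * Fhat s := by
    rw [Real.fourierInv_eq']
    refine MeasureTheory.integral_congr_ae (Filter.Eventually.of_forall fun s => ?_)
    norm_num [RCLike.inner_apply, smul_eq_mul]
  have h4 : ∫ s : ℝ, F (2*π*s) = (Complex.Gamma (ρ:ℂ))⁻¹ * 𝓕⁻ Fhat 1 := by
    rw [hinv, ← MeasureTheory.integral_const_mul]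
    refine MeasureTheory.integral_congr_ae (Filter.Eventually.of_forall fun s => ?_)
    have hbase : Complex.I * (((2*π*s : ℝ):ℂ) - z) = w + 2*π*s*Complex.I := by
      rw [hwdef]; push_cast; ring
    show Complex.exp (Complex.I * ((2*π*s : ℝ):ℂ)) *
        ((Complex.I * (((2*π*s : ℝ):ℂ) - z)) ^ (ρ:ℂ))⁻¹ = _
    rw [hbase, hFhatdef]
    simp only
    rw [mul_comm (Complex.I) (((2*π*s : ℝ):ℂ))]
    field_simp
  have h5 : 𝓕⁻ Fhat 1 = Complex.exp (Complex.I * z) := by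
    rw [hFhatdef, myKey hρ hw 1 one_ne_zero,
      Set.indicator_of_mem (by norm_num : (1:ℝ) ∈ Ioi (0:ℝ))]
    rw [hwdef]
    norm_num [Complex.one_cpow]
  rw [← h2, h4, h5]
  rw [real_smul]
  push_cast
  field_simp

end main

section main2
open Complex FourierTransform

lemma myNeg {ρ : ℝ} (hρ : 1 < ρ) {z : ℂ} (him : z.im < 0) :
    ∫ t : ℝ, Complex.exp (Complex.I * t) / ((t : ℂ) - z) ^ (ρ : ℂ) = 0 := by
  have hΓ : Complex.Gamma (ρ:ℂ) ≠ 0 := Complex.Gamma_ne_zero_of_re_pos (by simp; linarith)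
  set w : ℂ := Complex.I * z with hwdef
  have hw : 0 < w.re := by
    rw [hwdef]
    simp only [Complex.mul_re, Complex.I_re, Complex.I_im]
    simpa using him
  set Fhat : ℝ → ℂ := fun s => Complex.Gamma ρ / (w + 2 * π * s * Complex.I) ^ (ρ : ℂ)
    with hFhatdef
  set F : ℝ → ℂ := fun t =>
    Complex.exp (Complex.I * t) * (((-Complex.I) * ((t:ℂ) - z)) ^ (ρ:ℂ))⁻¹ with hFdef
  have hpt : ∀ t : ℝ, Complex.exp (Complex.I * t) / ((t:ℂ) - z) ^ (ρ:ℂ)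
      = Complex.exp (-((π:ℂ) * Complex.I * ρ / 2)) * F t := by
    intro t
    have hyre : 0 < ((-Complex.I) * ((t:ℂ) - z)).re := by
      simp only [neg_mul, Complex.neg_re, Complex.mul_re, Complex.I_re, Complex.I_im]
      simpa using him
    have hyne : (-Complex.I) * ((t:ℂ) - z) ≠ 0 := fun h => by simp [h] at hyre
    have harg : Complex.arg (Complex.I) + Complex.arg ((-Complex.I) * ((t:ℂ) - z))
        ∈ Set.Ioc (-π) π := by
      rw [Complex.arg_I]
      have h1 := abs_lt.mp (Complex.abs_arg_lt_pi_div_two_iff.mpr (Or.inl hyre))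
      constructor
      · linarith [Real.pi_pos, h1.1]
      · linarith [Real.pi_pos, h1.2]
    have hxy : Complex.I * ((-Complex.I) * ((t:ℂ) - z)) = (t:ℂ) - z := by
      rw [show Complex.I * ((-Complex.I) * ((t:ℂ) - z))
          = -(Complex.I * Complex.I) * ((t:ℂ) - z) by ring, Complex.I_mul_I]
      ring
    have hpow : ((t:ℂ) - z) ^ (ρ:ℂ)
        = Complex.I ^ (ρ:ℂ) * ((-Complex.I) * ((t:ℂ) - z)) ^ (ρ:ℂ) := by
      conv_lhs => rw [← hxy]
      exact myMulCpow Complex.I_ne_zero hyne harg _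
    have hmI : ((Complex.I) ^ (ρ:ℂ))⁻¹ = Complex.exp (-((π:ℂ) * Complex.I * ρ / 2)) := by
      rw [Complex.cpow_def_of_ne_zero Complex.I_ne_zero, Complex.log_I, ← Complex.exp_neg]
      congr 1
      push_cast
      ring
    rw [hpow, div_eq_mul_inv, mul_inv, hFdef]
    simp only
    rw [← hmI]
    ring
  simp_rw [hpt]
  rw [MeasureTheory.integral_const_mul]
  have h2 : ((2*π : ℝ)) • (∫ s : ℝ, F (2*π*s)) = ∫ t : ℝ, F t := by
    rw [MeasureTheory.Measure.integral_comp_mul_left F (2*π), smul_smul,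
      abs_of_pos (by positivity : (0:ℝ) < (2*π)⁻¹), mul_inv_cancel₀ (by positivity), one_smul]
  have hinv : 𝓕⁻ Fhat (-1) = ∫ s : ℝ, Complex.exp (((2*π*(s * (-1)) : ℝ):ℂ) * Complex.I) * Fhat s := by
    rw [Real.fourierInv_eq']
    refine MeasureTheory.integral_congr_ae (Filter.Eventually.of_forall fun s => ?_)
    norm_num [RCLike.inner_apply, smul_eq_mul]
  have h4 : ∫ s : ℝ, F (2*π*s) = (Complex.Gamma (ρ:ℂ))⁻¹ * 𝓕⁻ Fhat (-1) := by
    rw [hinv]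
    rw [show (∫ s : ℝ, Complex.exp (((2*π*(s * (-1)) : ℝ):ℂ) * Complex.I) * Fhat s)
        = ∫ s : ℝ, (fun u : ℝ => Complex.exp (((2*π*(u * (-1)) : ℝ):ℂ) * Complex.I) * Fhat u) (-s)
        from (MeasureTheory.integral_neg_eq_self _ _).symm]
    rw [← MeasureTheory.integral_const_mul]
    refine MeasureTheory.integral_congr_ae (Filter.Eventually.of_forall fun s => ?_)
    have hbase : (-Complex.I) * (((2*π*s : ℝ):ℂ) - z) = w + 2*π*(-s)*Complex.I := by
      rw [hwdef]; push_cast; ring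
    show Complex.exp (Complex.I * ((2*π*s : ℝ):ℂ)) *
        (((-Complex.I) * (((2*π*s : ℝ):ℂ) - z)) ^ (ρ:ℂ))⁻¹ = _
    rw [hbase, hFhatdef]
    simp only
    have hexp : ((2*π*(-s * (-1)) : ℝ):ℂ) * Complex.I = Complex.I * ((2*π*s : ℝ):ℂ) := by
      push_cast; ring
    rw [hexp]
    have harg2 : (w + 2*π*(-s)*Complex.I : ℂ) = w + 2*π*(-s : ℝ)*Complex.I := by push_cast; ring
    rw [harg2]
    field_simp
  have h5 : 𝓕⁻ Fhat (-1) = 0 := by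
    rw [hFhatdef, myKey hρ hw (-1) (by norm_num),
      Set.indicator_of_notMem (by norm_num : ¬((-1:ℝ) ∈ Ioi (0:ℝ)))]
  rw [← h2, h4, h5]
  simp

end main2
end helpers

theorem integral_exp_div_pow (ρ : ℝ) (hρ : 1 < ρ) (z : ℂ) (hz : z.im ≠ 0) :
    (0 < z.im → ∫ t : ℝ, Complex.exp (Complex.I * t) / ((t : ℂ) - z) ^ (ρ : ℂ) =
      2 * (π : ℂ) * Complex.exp ((π : ℂ) * Complex.I * (ρ : ℂ) / 2) / Complex.Gamma (ρ : ℂ) *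
        Complex.exp (Complex.I * z)) ∧
    (z.im < 0 → ∫ t : ℝ, Complex.exp (Complex.I * t) / ((t : ℂ) - z) ^ (ρ : ℂ) = 0) := by
  exact ⟨fun h => myPos hρ h, fun h => myNeg hρ h⟩
end
end

section
/- Let s > 1 be a real number. Then for every natural number n with n < s, ∫_ℝ x^n/(x + i)^{s+1} dx = 0. -/
open scoped Real MatrixGroups
open Filter MeasureTheory UpperHalfPlane

noncomputable section

lemma xaddI_ne_zero (x : ℝ) : (x : ℂ) + Complex.I ≠ 0 := by
  intro h
  have := congrArg Complex.im h
  simp at this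

lemma norm_xaddI_cpow_le (w : ℂ) (x : ℝ) :
    ‖((x : ℂ) + Complex.I) ^ w‖ ≤
      Real.exp (π * |w.im|) * ((1 + ‖x‖ ^ 2) ^ (w.re / 2)) := by
  have hz := xaddI_ne_zero x
  have habs : ‖(x : ℂ) + Complex.I‖ = Real.sqrt (1 + x ^ 2) := by
    rw [Complex.norm_def, Complex.normSq_apply]
    simp
    ring_nf
  have h1 : ‖(x : ℂ) + Complex.I‖ ^ w.re = (1 + x ^ 2) ^ (w.re / 2) := by
    rw [habs, Real.rpow_div_two_eq_sqrt _ (by positivity)]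
  rw [Complex.norm_cpow_of_ne_zero hz, h1, Real.norm_eq_abs, _root_.sq_abs,
    div_eq_mul_inv, ← Real.exp_neg, mul_comm]
  gcongr
  calc -(Complex.arg ((x : ℂ) + Complex.I) * w.im) ≤ |Complex.arg ((x : ℂ) + Complex.I) * w.im| :=
        neg_le_abs _
    _ = |Complex.arg ((x : ℂ) + Complex.I)| * |w.im| := abs_mul _ _
    _ ≤ π * |w.im| := by gcongr; exact Complex.abs_arg_le_pi _

lemma integrable_xaddI_cpow {w : ℂ} (hw : 1 < w.re) :
    Integrable (fun x : ℝ => ((x : ℂ) + Complex.I) ^ (-w)) := by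
  have hmeas : AEStronglyMeasurable (fun x : ℝ => ((x : ℂ) + Complex.I) ^ (-w)) volume := by
    refine Continuous.aestronglyMeasurable ?_
    refine Continuous.cpow (by continuity) continuous_const fun x => ?_
    exact Or.inr (by simp)
  have hint : Integrable (fun x : ℝ =>
      Real.exp (π * |(-w).im|) * ((1 + ‖x‖ ^ 2) ^ (-w.re / 2))) volume := by
    refine Integrable.const_mul ?_ _
    have := integrable_rpow_neg_one_add_norm_sq (E := ℝ) (μ := volume) (r := w.re)
      (by simpa using hw)
    exact this
  refine hint.mono' hmeas (Filter.Eventually.of_forall fun x => ?_)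
  have := norm_xaddI_cpow_le (-w) x
  simpa using this

lemma tendsto_xaddI_cpow_atTop {v : ℂ} (hv : v.re < 0) :
    Tendsto (fun x : ℝ => ((x : ℂ) + Complex.I) ^ v) atTop (nhds 0) ∧
    Tendsto (fun x : ℝ => ((x : ℂ) + Complex.I) ^ v) atBot (nhds 0) := by
  have key : ∀ l : Filter ℝ, Tendsto (fun x : ℝ => ‖x‖) l atTop →
      Tendsto (fun x : ℝ => ((x : ℂ) + Complex.I) ^ v) l (nhds 0) := by
    intro l hl
    refine squeeze_zero_norm (fun x => norm_xaddI_cpow_le v x) ?_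
    rw [show (0:ℝ) = Real.exp (π * |v.im|) * 0 by ring]
    refine Tendsto.const_mul _ ?_
    have h2 : Tendsto (fun x : ℝ => 1 + ‖x‖ ^ 2) l atTop :=
      tendsto_atTop_add_const_left _ _ ((tendsto_pow_atTop two_ne_zero).comp hl)
    have h3 := (tendsto_rpow_neg_atTop (y := -(v.re / 2)) (by linarith)).comp h2
    simpa [Function.comp_def] using h3
  exact ⟨key atTop (by simpa using tendsto_abs_atTop_atTop),
    key atBot (by simpa [Real.norm_eq_abs] using tendsto_abs_atBot_atTop)⟩


lemma integral_xaddI_cpow_zero {w : ℂ} (hw : 1 < w.re) :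
    ∫ x : ℝ, ((x : ℂ) + Complex.I) ^ (-w) = 0 := by
  have hne : (1 : ℂ) - w ≠ 0 := by
    intro h
    have := congrArg Complex.re h
    simp at this
    linarith
  set F : ℝ → ℂ := fun x => ((x : ℂ) + Complex.I) ^ ((1 : ℂ) - w) / (1 - w) with hF
  have hderiv : ∀ x : ℝ, HasDerivAt F (((x : ℂ) + Complex.I) ^ (-w)) x := by
    intro x
    have h1 : HasDerivAt (fun x : ℝ => (x : ℂ) + Complex.I) 1 x := by
      simpa using (Complex.ofRealCLM.hasDerivAt (x := x)).add_const Complex.I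
    have hmem : ((x : ℂ) + Complex.I) ∈ Complex.slitPlane := Or.inr (by simp)
    have h2' : HasDerivAt (fun x : ℝ => ((x : ℂ) + Complex.I) ^ ((1 : ℂ) - w))
        ((((1 : ℂ) - w) * ((x : ℂ) + Complex.I) ^ ((1 : ℂ) - w - 1)) * 1) x :=
      by have := HasDerivAt.comp x
          (Complex.hasStrictDerivAt_cpow_const (c := (1 : ℂ) - w) hmem).hasDerivAt h1; exact this
    have h2 := h2'.div_const (1 - w)
    refine h2.congr_deriv (Eq.symm ?_)
    rw [mul_one, mul_comm, mul_div_assoc, div_self hne, mul_one]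
    congr 1
    ring
  have htends := tendsto_xaddI_cpow_atTop (v := (1 : ℂ) - w) (by simp; linarith)
  have hint := integrable_xaddI_cpow hw
  rw [← intervalIntegral.integral_Iic_add_Ioi (b := 0) hint.integrableOn hint.integrableOn,
    integral_Iic_of_hasDerivAt_of_tendsto' (fun x _ => hderiv x) hint.integrableOn
      (htends.2.div_const _),
    integral_Ioi_of_hasDerivAt_of_tendsto' (fun x _ => hderiv x) hint.integrableOn
      (htends.1.div_const _)]
  ring

theorem vanishing_moments_psiW (s : ℝ) (hs : 1 < s) :
    ∀ n : ℕ, (n : ℝ) < s →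
      ∫ x : ℝ, (x : ℂ) ^ n / ((x : ℂ) + Complex.I) ^ ((s : ℂ) + 1) = 0 := by
  intro n hn
  have key : ∀ x : ℝ, (x : ℂ) ^ n / ((x : ℂ) + Complex.I) ^ ((s : ℂ) + 1)
      = ∑ k ∈ Finset.range (n + 1),
        ((n.choose k : ℂ) * (-Complex.I) ^ (n - k)) *
          (((x : ℂ) + Complex.I) ^ (-(((s : ℂ) + 1) - (k : ℂ)))) := by
    intro x
    have hz := xaddI_ne_zero x
    have hx : (x : ℂ) = ((x : ℂ) + Complex.I) + (-Complex.I) := by ring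
    rw [show (x : ℂ) ^ n = (((x : ℂ) + Complex.I) + -Complex.I) ^ n by rw [← hx], add_pow, Finset.sum_div]
    refine Finset.sum_congr rfl fun k hk => ?_
    have h1 : ((x : ℂ) + Complex.I) ^ ((k : ℂ) - (((s : ℂ) + 1))) =
        ((x : ℂ) + Complex.I) ^ k / ((x : ℂ) + Complex.I) ^ ((s : ℂ) + 1) := by
      rw [Complex.cpow_sub _ _ hz, Complex.cpow_natCast]
    rw [neg_sub, h1]
    ring
  have hre : ∀ k ∈ Finset.range (n + 1), 1 < (((s : ℂ) + 1) - (k : ℂ)).re := by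
    intro k hk
    have hk' : (k : ℝ) ≤ n := by
      exact_mod_cast Nat.lt_succ_iff.mp (Finset.mem_range.mp hk)
    simp
    linarith
  simp_rw [key]
  rw [integral_finset_sum _ (fun k hk => (integrable_xaddI_cpow (hre k hk)).const_mul _)]
  simp_rw [integral_const_mul]
  refine Finset.sum_eq_zero fun k hk => ?_
  rw [integral_xaddI_cpow_zero (hre k hk), mul_zero]
end
end

section
/- Let s > 0 be a real number and let ψ_s(x) = (x + i)^{−(s+1)}. Then the Fourier transform ψ̂_s(ξ) = 0 for all ξ < 0. -/
open scoped Real MatrixGroups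
open Filter MeasureTheory UpperHalfPlane

noncomputable section

private lemma ft_im (c x : ℝ) : ((x : ℂ) + c * Complex.I).im = c := by simp

private lemma ft_re (c x : ℝ) : ((x : ℂ) + c * Complex.I).re = x := by simp

private lemma ft_slit {c : ℝ} (hc : 0 < c) (x : ℝ) : (x : ℂ) + c * Complex.I ∈ Complex.slitPlane := by
  rw [Complex.mem_slitPlane_iff]
  right; rw [ft_im]; exact ne_of_gt hc

private lemma ft_abs_lower {c : ℝ} (hc : 1/2 ≤ c) (x : ℝ) :
    (1 + |x|) / 3 ≤ ‖((x : ℂ) + c * Complex.I)‖ := by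
  have h1 : |x| ≤ ‖((x : ℂ) + c * Complex.I)‖ := by
    simpa [ft_re] using Complex.abs_re_le_norm ((x : ℂ) + c * Complex.I)
  have h2 : c ≤ ‖((x : ℂ) + c * Complex.I)‖ := by
    have := Complex.abs_im_le_norm ((x : ℂ) + c * Complex.I)
    rw [ft_im] at this
    exact (le_abs_self c).trans this
  linarith

private lemma ft_norm_eq (r c x ξ : ℝ) :
    ‖((x : ℂ) + c * Complex.I) ^ ((-r : ℝ) : ℂ) * Complex.exp (-(Complex.I * x * ξ))‖
      = ‖((x : ℂ) + c * Complex.I)‖ ^ (-r) := by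
  rw [norm_mul, Complex.norm_cpow_real,
    Complex.norm_exp]
  have : (-(Complex.I * (x:ℂ) * (ξ:ℂ))).re = 0 := by simp
  rw [this, Real.exp_zero, mul_one]

private lemma ft_norm_bound {r : ℝ} (hr : 0 < r) {c : ℝ} (hc : 1/2 ≤ c) (x ξ : ℝ) :
    ‖((x : ℂ) + c * Complex.I) ^ ((-r : ℝ) : ℂ) * Complex.exp (-(Complex.I * x * ξ))‖
      ≤ 3 ^ r * (1 + |x|) ^ (-r) := by
  rw [ft_norm_eq]
  have h0 : (0:ℝ) < (1 + |x|) / 3 := by positivity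
  have h := Real.rpow_le_rpow_of_nonpos h0 (ft_abs_lower hc x) (neg_nonpos.mpr hr.le)
  refine h.trans_eq ?_
  rw [Real.div_rpow (by positivity) (by norm_num), div_eq_mul_inv, ← Real.rpow_neg (by norm_num),
    neg_neg, mul_comm]

private lemma ft_integrable_bound {r : ℝ} (hr : 1 < r) :
    Integrable (fun x : ℝ => 3 ^ r * (1 + |x|) ^ (-r)) := by
  have h : Integrable (fun x : ℝ => (1 + ‖x‖) ^ (-r)) := by
    apply integrable_one_add_norm (E := ℝ)
    simpa using hr
  exact (h.congr (by simp [Real.norm_eq_abs])).const_mul _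

private lemma ft_cont {c : ℝ} (hc : 0 < c) (r ξ : ℝ) :
    Continuous (fun x : ℝ => ((x : ℂ) + c * Complex.I) ^ ((-r : ℝ) : ℂ) * Complex.exp (-(Complex.I * x * ξ))) := by
  apply Continuous.mul
  · exact (Complex.continuous_ofReal.add continuous_const).cpow continuous_const
      (fun x => ft_slit hc x)
  · exact Complex.continuous_exp.comp (by fun_prop)

private lemma ft_integrable {r : ℝ} (hr : 1 < r) {c : ℝ} (hc : 1/2 ≤ c) (ξ : ℝ) :
    Integrable (fun x : ℝ => ((x : ℂ) + c * Complex.I) ^ ((-r : ℝ) : ℂ) * Complex.exp (-(Complex.I * x * ξ))) := by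
  refine (ft_integrable_bound hr).mono' ((ft_cont (by linarith) r ξ).aestronglyMeasurable) ?_
  exact Filter.Eventually.of_forall fun x => ft_norm_bound (by linarith) hc x ξ

private lemma ft_hasDerivAt_x {c : ℝ} (hc : 0 < c) (r ξ x : ℝ) :
    HasDerivAt (fun y : ℝ => ((y : ℂ) + c * Complex.I) ^ ((-r : ℝ) : ℂ) * Complex.exp (-(Complex.I * y * ξ)))
      (((-r : ℝ) : ℂ) * ((x : ℂ) + c * Complex.I) ^ ((-(r+1) : ℝ) : ℂ) * Complex.exp (-(Complex.I * x * ξ))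
        + ((x : ℂ) + c * Complex.I) ^ ((-r : ℝ) : ℂ) * (-(Complex.I * ξ) * Complex.exp (-(Complex.I * x * ξ)))) x := by
  have h1 : HasDerivAt (fun y : ℝ => ((y : ℂ) + c * Complex.I) ^ ((-r : ℝ) : ℂ))
      (((-r : ℝ) : ℂ) * ((x : ℂ) + c * Complex.I) ^ ((-(r+1) : ℝ) : ℂ)) x := by
    have hz : HasDerivAt (fun z : ℂ => (z + c * Complex.I) ^ ((-r : ℝ) : ℂ))
        (((-r : ℝ) : ℂ) * ((x : ℂ) + c * Complex.I) ^ (((-r : ℝ) : ℂ) - 1) * 1) (x : ℂ) :=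
      ((hasDerivAt_id ((x : ℂ))).add_const _).cpow_const (ft_slit hc x)
    have := hz.comp_ofReal
    have he : (((-r : ℝ) : ℂ) - 1) = ((-(r+1) : ℝ) : ℂ) := by push_cast; ring
    rw [he, mul_one] at this
    exact this
  have h2 : HasDerivAt (fun y : ℝ => Complex.exp (-(Complex.I * y * ξ)))
      (-(Complex.I * ξ) * Complex.exp (-(Complex.I * x * ξ))) x := by
    have hz : HasDerivAt (fun z : ℂ => Complex.exp (-(Complex.I * z * ξ)))
        (Complex.exp (-(Complex.I * x * ξ)) * -(Complex.I * ξ)) (x : ℂ) := by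
      have inner : HasDerivAt (fun z : ℂ => -(Complex.I * z * ξ)) (-(Complex.I * ξ)) (x : ℂ) := by
        have : HasDerivAt (fun z : ℂ => Complex.I * z * ξ) (Complex.I * ξ) (x : ℂ) := by
          simpa using (((hasDerivAt_id ((x : ℂ))).const_mul Complex.I).mul_const (ξ : ℂ))
        exact this.neg
      exact inner.cexp
    have := hz.comp_ofReal
    rw [mul_comm] at this
    exact this
  exact h1.mul h2

private lemma ft_tendsto_zero {r : ℝ} (hr : 0 < r) {c : ℝ} (hc : 1/2 ≤ c) (ξ : ℝ)
    (l : Filter ℝ) (hl : Tendsto (fun x : ℝ => |x|) l atTop) :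
    Tendsto (fun x : ℝ => ((x : ℂ) + c * Complex.I) ^ ((-r : ℝ) : ℂ) * Complex.exp (-(Complex.I * x * ξ)))
      l (nhds 0) := by
  rw [tendsto_zero_iff_norm_tendsto_zero]
  have habs : Tendsto (fun x : ℝ => ‖((x : ℂ) + c * Complex.I)‖) l atTop := by
    apply tendsto_atTop_mono (fun x => ft_abs_lower hc x)
    exact (tendsto_atTop_add_const_left l 1 hl).atTop_div_const (by norm_num)
  have h2 := (tendsto_rpow_neg_atTop hr).comp habs
  simpa only [Function.comp_def, ft_norm_eq] using h2

private lemma ft_IBP {r : ℝ} (hr : 1 < r) {c : ℝ} (hc : 1/2 ≤ c) (ξ : ℝ) :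
    (((-r : ℝ) : ℂ) * ∫ x : ℝ, ((x : ℂ) + c * Complex.I) ^ ((-(r+1) : ℝ) : ℂ) *
        Complex.exp (-(Complex.I * x * ξ)))
      + ((-(Complex.I * ξ)) * ∫ x : ℝ, ((x : ℂ) + c * Complex.I) ^ ((-r : ℝ) : ℂ) * Complex.exp (-(Complex.I * x * ξ)))
      = 0 := by
  have hc0 : (0:ℝ) < c := by linarith
  set f₁ : ℝ → ℂ := fun x => ((x : ℂ) + c * Complex.I) ^ ((-r : ℝ) : ℂ) * Complex.exp (-(Complex.I * x * ξ))
    with hf₁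
  set f₂ : ℝ → ℂ := fun x => ((x : ℂ) + c * Complex.I) ^ ((-(r+1) : ℝ) : ℂ) * Complex.exp (-(Complex.I * x * ξ))
    with hf₂
  set g' : ℝ → ℂ := fun x => ((-r : ℝ) : ℂ) * f₂ x + (-(Complex.I * ξ)) * f₁ x with hg'
  have hg : ∀ x : ℝ, HasDerivAt f₁ (g' x) x := by
    intro x
    have h := ft_hasDerivAt_x hc0 r ξ x
    convert h using 1
    simp only [hg', hf₁, hf₂]
    ring
  have hint1 : Integrable f₁ := ft_integrable hr hc ξ
  have hint2 : Integrable f₂ := ft_integrable (by linarith) hc ξ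
  have hint : Integrable g' := (hint2.const_mul _).add (hint1.const_mul _)
  have htop : Tendsto f₁ atTop (nhds 0) :=
    ft_tendsto_zero (by linarith) hc ξ atTop (by simpa using tendsto_abs_atTop_atTop)
  have hbot : Tendsto f₁ atBot (nhds 0) :=
    ft_tendsto_zero (by linarith) hc ξ atBot (by simpa using tendsto_abs_atBot_atTop)
  have h1 : ∫ x in Set.Iic (0:ℝ), g' x = f₁ 0 - 0 :=
    integral_Iic_of_hasDerivAt_of_tendsto' (fun x _ => hg x) hint.integrableOn hbot
  have h2 : ∫ x in Set.Ioi (0:ℝ), g' x = 0 - f₁ 0 :=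
    integral_Ioi_of_hasDerivAt_of_tendsto' (fun x _ => hg x) hint.integrableOn htop
  have h3 : ∫ x : ℝ, g' x = 0 := by
    rw [← intervalIntegral.integral_Iic_add_Ioi hint.integrableOn hint.integrableOn, h1, h2]
    ring
  rw [integral_add (hint2.const_mul _) (hint1.const_mul _), integral_const_mul,
    integral_const_mul] at h3
  simpa only [hf₁, hf₂] using h3

private lemma ft_deriv_c {r : ℝ} (hr : 1 < r) (ξ : ℝ) {c₀ : ℝ} (hc₀ : 1 ≤ c₀) :
    HasDerivAt
      (fun c : ℝ => ∫ x : ℝ, ((x : ℂ) + c * Complex.I) ^ ((-r : ℝ) : ℂ) * Complex.exp (-(Complex.I * x * ξ)))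
      (∫ x : ℝ, (((-r : ℝ) : ℂ) * Complex.I) *
        (((x : ℂ) + c₀ * Complex.I) ^ ((-(r+1) : ℝ) : ℂ) * Complex.exp (-(Complex.I * x * ξ)))) c₀ := by
  have hball : ∀ c ∈ Metric.ball c₀ (1/4), (1:ℝ)/2 ≤ c := by
    intro c hcb
    rw [Metric.mem_ball, Real.dist_eq, abs_sub_lt_iff] at hcb
    linarith [hcb.2]
  refine (hasDerivAt_integral_of_dominated_loc_of_deriv_le (s := Metric.ball c₀ (1/4))
    (F' := fun (c : ℝ) (x : ℝ) => (((-r : ℝ) : ℂ) * Complex.I) *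
      (((x : ℂ) + c * Complex.I) ^ ((-(r+1) : ℝ) : ℂ) * Complex.exp (-(Complex.I * x * ξ)))) (Metric.ball_mem_nhds _ (by norm_num))
    ?_ (ft_integrable hr (show (1:ℝ)/2 ≤ c₀ by linarith) ξ) ?_ ?_
    ((ft_integrable_bound (r := r+1) (by linarith)).const_mul r) ?_).2
  · filter_upwards [Ioi_mem_nhds (show (1:ℝ)/2 < c₀ by linarith)] with c hcp
    exact (ft_cont ((by norm_num : (0:ℝ) < 1/2).trans hcp) r ξ).aestronglyMeasurable
  · exact (continuous_const.mul ((ft_cont (by linarith : (0:ℝ) < c₀) (r+1) ξ))).aestronglyMeasurable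
  · refine Filter.Eventually.of_forall fun x => fun c hcb => ?_
    have hc : (1:ℝ)/2 ≤ c := hball c hcb
    rw [norm_mul]
    have h1 : ‖((-r : ℝ) : ℂ) * Complex.I‖ = r := by
      rw [norm_mul, Complex.norm_I, Complex.norm_real, Real.norm_eq_abs, abs_neg,
        abs_of_pos (by linarith), mul_one]
    rw [h1]
    exact mul_le_mul_of_nonneg_left (ft_norm_bound (by linarith) hc x ξ) (by linarith)
  · refine Filter.Eventually.of_forall fun x => fun c hcb => ?_
    have hc0 : (0:ℝ) < c := by linarith [hball c hcb]
    have hz : HasDerivAt (fun t : ℂ => ((x : ℂ) + t * Complex.I) ^ ((-r : ℝ) : ℂ))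
        (((-r : ℝ) : ℂ) * ((x : ℂ) + c * Complex.I) ^ (((-r : ℝ) : ℂ) - 1) * Complex.I) (c : ℂ) := by
      have hin : HasDerivAt (fun t : ℂ => (x : ℂ) + t * Complex.I) Complex.I (c : ℂ) := by
        simpa using ((hasDerivAt_id ((c : ℂ))).mul_const Complex.I).const_add ((x:ℂ))
      exact hin.cpow_const (ft_slit hc0 x)
    have h := (hz.comp_ofReal).mul_const (Complex.exp (-(Complex.I * x * ξ)))
    refine h.congr_deriv ?_
    have he : (((-r : ℝ) : ℂ) - 1) = ((-(r+1) : ℝ) : ℂ) := by push_cast; ring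
    rw [he]
    ring


theorem fourier_transform_psiW_neg (s : ℝ) (hs : 0 < s) :
    ∀ ξ : ℝ, ξ < 0 → fourierT (psiW s) ξ = 0 := by
  intro ξ hξ
  set r : ℝ := s + 1 with hrdef
  have hr : 1 < r := by simp [hrdef]; linarith
  set H : ℝ → ℂ := fun c => ∫ x : ℝ, ((x : ℂ) + c * Complex.I) ^ ((-r : ℝ) : ℂ) *
    Complex.exp (-(Complex.I * x * ξ)) with hHdef
  set Φ : ℝ → ℂ := fun c => Complex.exp (((c : ℂ) - 1) * ξ) * H c with hΦdef
  -- derivative of Φ is zero for c ≥ 1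
  have hΦ : ∀ c₀ : ℝ, 1 ≤ c₀ → HasDerivAt Φ 0 c₀ := by
    intro c₀ hc₀
    have hexp : HasDerivAt (fun c : ℝ => Complex.exp (((c : ℂ) - 1) * ξ))
        ((ξ : ℂ) * Complex.exp (((c₀ : ℂ) - 1) * ξ)) c₀ := by
      have hz : HasDerivAt (fun t : ℂ => Complex.exp ((t - 1) * ξ))
          (Complex.exp (((c₀ : ℂ) - 1) * ξ) * ((ξ : ℂ))) (c₀ : ℂ) := by
        have hin : HasDerivAt (fun t : ℂ => (t - 1) * ξ) ((ξ : ℂ)) (c₀ : ℂ) := by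
          simpa using ((hasDerivAt_id ((c₀ : ℂ))).sub_const 1).mul_const ((ξ:ℂ))
        exact hin.cexp
      have := hz.comp_ofReal
      rwa [mul_comm] at this
    have hH' := ft_deriv_c hr ξ hc₀
    have hmul := hexp.mul hH'
    rw [show (0 : ℂ) = (ξ : ℂ) * Complex.exp (((c₀ : ℂ) - 1) * ξ) * H c₀ +
        Complex.exp (((c₀ : ℂ) - 1) * ξ) * ∫ x : ℝ, (((-r : ℝ) : ℂ) * Complex.I) *
          (((x : ℂ) + c₀ * Complex.I) ^ ((-(r+1) : ℝ) : ℂ) * Complex.exp (-(Complex.I * x * ξ))) from ?_]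
    · exact hmul
    · rw [integral_const_mul]
      have hIBP := ft_IBP hr (show (1:ℝ)/2 ≤ c₀ by linarith) ξ
      have hII : (Complex.I : ℂ) * Complex.I = -1 := Complex.I_mul_I
      set e := Complex.exp (((c₀ : ℂ) - 1) * ξ)
      set J1 := ∫ x : ℝ, ((x : ℂ) + c₀ * Complex.I) ^ ((-r : ℝ) : ℂ) * Complex.exp (-(Complex.I * x * ξ))
      set J2 := ∫ x : ℝ, ((x : ℂ) + c₀ * Complex.I) ^ ((-(r+1) : ℝ) : ℂ) * Complex.exp (-(Complex.I * x * ξ))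
      have hH1 : H c₀ = J1 := rfl
      rw [hH1]
      push_cast at hIBP ⊢
      linear_combination (-e*Complex.I) * hIBP + (-e*(ξ:ℂ)*J1) * hII
  -- Φ is constant on [1, ∞)
  have hconst : ∀ b : ℝ, 1 ≤ b → Φ b = Φ 1 := by
    intro b hb
    have hcont : ContinuousOn Φ (Set.Icc 1 b) := fun x hx =>
      (hΦ x hx.1).continuousAt.continuousWithinAt
    have hderiv : ∀ x ∈ Set.Ico (1:ℝ) b, HasDerivWithinAt Φ 0 (Set.Ici x) x := fun x hx =>
      (hΦ x hx.1).hasDerivWithinAt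
    exact constant_of_has_deriv_right_zero hcont hderiv b (Set.mem_Icc.mpr ⟨hb, le_refl b⟩)
  -- Φ tends to 0 at infinity
  have hM : Tendsto Φ atTop (nhds 0) := by
    apply squeeze_zero_norm' (a := fun c => Real.exp ((c-1)*ξ) * ∫ x : ℝ, 3 ^ r * (1 + |x|) ^ (-r))
    · filter_upwards [eventually_ge_atTop (1:ℝ)] with c hc
      have h1 : ‖Φ c‖ = Real.exp ((c-1)*ξ) * ‖H c‖ := by
        rw [hΦdef]
        simp only [norm_mul, Complex.norm_exp]
        congr 2
        have : ((c : ℂ) - 1) * ξ = (((c - 1) * ξ : ℝ) : ℂ) := by push_cast; ring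
        rw [this, Complex.ofReal_re]
      rw [h1]
      apply mul_le_mul_of_nonneg_left _ (Real.exp_pos _).le
      exact norm_integral_le_of_norm_le (ft_integrable_bound hr)
        (Filter.Eventually.of_forall fun x => ft_norm_bound (by linarith) (by linarith) x ξ)
    · have hlin : Tendsto (fun c : ℝ => (c - 1) * ξ) atTop atBot := by
        exact (tendsto_atTop_add_const_right atTop (-1) tendsto_id).atTop_mul_const_of_neg hξ
      have := (Real.tendsto_exp_atBot.comp hlin).mul_const (∫ x : ℝ, 3 ^ r * (1 + |x|) ^ (-r))
      simpa using this
  -- conclude Φ 1 = 0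
  have hΦ1 : Φ 1 = 0 := by
    have h2 : Tendsto Φ atTop (nhds (Φ 1)) :=
      Tendsto.congr' (by filter_upwards [eventually_ge_atTop (1:ℝ)] with c hc
        using (hconst c hc).symm) tendsto_const_nhds
    exact tendsto_nhds_unique h2 hM
  -- identify fourierT with Φ 1
  have hfour : fourierT (psiW s) ξ = Φ 1 := by
    have hΦ1' : Φ 1 = H 1 := by
      rw [hΦdef]
      norm_num
    rw [hΦ1', fourierT, hHdef]
    congr 1
    funext x
    have h1 : ((x : ℂ) + (1:ℝ) * Complex.I) = (x : ℂ) + Complex.I := by norm_num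
    have h2 : ((-r : ℝ) : ℂ) = (-(s+1) : ℂ) := by rw [hrdef]; push_cast; ring
    rw [h1, h2, psiW]
  rw [hfour, hΦ1]
end
end

section
/- Let s > 1 be a real number and let ψ_s(x) = (x + i)^{−(s+1)}. Then ∫_0^∞ |ψ̂_s(ξ)|² dξ/ξ = |2π e^{iπ(s+1)/2}/Γ(s+1)|² · 2^{−2s} · Γ(2s), and in particular this integral is finite. -/
open scoped Real MatrixGroups
open Filter MeasureTheory UpperHalfPlane

noncomputable section

open Complex Set
open scoped FourierTransform

lemma aux_int_rpow_exp {p c : ℝ} (hp : 0 < p) (hc : 0 < c) :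
    IntegrableOn (fun t : ℝ => t ^ p * Real.exp (-(c * t))) (Set.Ioi 0) := by
  have h1 : IntegrableOn (fun x : ℝ => Real.exp (-x) * x ^ p) (Set.Ioi 0) := by
    simpa using Real.GammaIntegral_convergent (by linarith : (0:ℝ) < p + 1)
  have h2 : IntegrableOn (fun t : ℝ => Real.exp (-(c * t)) * (c * t) ^ p) (Set.Ioi 0) := by
    have := (integrableOn_Ioi_comp_mul_left_iff
      (fun x : ℝ => Real.exp (-x) * x ^ p) 0 hc).mpr (by simpa using h1)
    simpa using this
  have h3 : IntegrableOn (fun t : ℝ => c ^ (-p) * (Real.exp (-(c * t)) * (c * t) ^ p)) (Set.Ioi 0) := h2.const_mul (c ^ (-p))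
  refine IntegrableOn.congr_fun h3 (fun t ht => ?_) measurableSet_Ioi
  have ht' : (0:ℝ) < t := ht
  rw [Real.mul_rpow hc.le ht'.le]
  rw [Real.rpow_neg hc.le]
  field_simp [(Real.rpow_pos_of_pos hc p).ne']

lemma aux_aesm (s : ℝ) (z : ℂ) : AEStronglyMeasurable
    (fun t : ℝ => (t:ℂ) ^ (s:ℂ) * Complex.exp (-(z * t)))
    (volume.restrict (Set.Ioi 0)) := by
  refine ContinuousOn.aestronglyMeasurable (fun t ht => ?_) measurableSet_Ioi
  have ht' : (0:ℝ) < t := ht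
  refine ContinuousAt.continuousWithinAt ?_
  refine ContinuousAt.mul ?_ ?_
  · exact continuousAt_ofReal_cpow_const _ _ (Or.inr ht'.ne')
  · exact (Complex.continuous_exp.comp (by continuity)).continuousAt

lemma aux_norm_cpow_exp (s : ℝ) (z : ℂ) {t : ℝ} (ht : 0 < t) :
    ‖(t:ℂ) ^ (s:ℂ) * Complex.exp (-(z * t))‖ = t ^ s * Real.exp (-(z.re * t)) := by
  rw [norm_mul, Complex.norm_exp,
    Complex.norm_cpow_eq_rpow_re_of_pos ht]
  simp [Complex.neg_re, Complex.mul_re]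


lemma aux_integrableOn_cpow_exp {s : ℝ} (hs : 0 < s) {z : ℂ} (hz : 0 < z.re) :
    IntegrableOn (fun t : ℝ => (t:ℂ) ^ (s:ℂ) * Complex.exp (-(z * t))) (Set.Ioi 0) := by
  refine Integrable.mono' (aux_int_rpow_exp hs hz) (aux_aesm s z) ?_
  filter_upwards [ae_restrict_mem measurableSet_Ioi] with t ht
  rw [aux_norm_cpow_exp s z ht]

lemma aux_hasDerivAt (s : ℝ) (hs : 0 < s) {z₀ : ℂ} (hz₀ : 0 < z₀.re) :
    HasDerivAt (fun z : ℂ => ∫ t in Set.Ioi (0:ℝ), (t:ℂ) ^ (s:ℂ) * Complex.exp (-(z * t)))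
      (∫ t in Set.Ioi (0:ℝ), (t:ℂ) ^ (s:ℂ) * (-(t:ℂ) * Complex.exp (-(z₀ * t)))) z₀ := by
  set ε : ℝ := z₀.re / 2 with hε
  have hεpos : 0 < ε := by positivity
  have key := hasDerivAt_integral_of_dominated_loc_of_deriv_le (μ := volume.restrict (Set.Ioi 0))
    (F := fun (z : ℂ) (t : ℝ) => (t:ℂ) ^ (s:ℂ) * Complex.exp (-(z * t)))
    (F' := fun (z : ℂ) (t : ℝ) => (t:ℂ) ^ (s:ℂ) * (-(t:ℂ) * Complex.exp (-(z * t))))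
    (bound := fun t : ℝ => t ^ (s+1) * Real.exp (-(ε * t)))
    (x₀ := z₀) (Metric.ball_mem_nhds z₀ hεpos)
    (Filter.Eventually.of_forall fun z => aux_aesm s z)
    (aux_integrableOn_cpow_exp hs hz₀)
    ?_ ?_ ?_ ?_
  · exact key.2
  · -- AESM of F' z₀
    refine ContinuousOn.aestronglyMeasurable (fun t ht => ?_) measurableSet_Ioi
    have ht' : (0:ℝ) < t := ht
    refine ContinuousAt.continuousWithinAt (ContinuousAt.mul ?_ (ContinuousAt.mul ?_ ?_))
    · exact continuousAt_ofReal_cpow_const _ _ (Or.inr ht'.ne')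
    · exact (Complex.continuous_ofReal.neg).continuousAt
    · exact (Complex.continuous_exp.comp (by continuity)).continuousAt
  · -- bound
    filter_upwards [ae_restrict_mem measurableSet_Ioi] with t ht z hz
    have ht' : (0:ℝ) < t := ht
    have hre : ε ≤ z.re := by
      have := Complex.abs_re_le_norm (z - z₀)
      have h2 : ‖z - z₀‖ < ε := by
        simpa [Complex.dist_eq] using hz
      have : |z.re - z₀.re| < ε := by
        simpa [Complex.sub_re] using lt_of_le_of_lt this h2
      have := abs_lt.mp this
      linarith [this.1]
    calc ‖(t:ℂ) ^ (s:ℂ) * (-(t:ℂ) * Complex.exp (-(z * t)))‖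
        = t ^ s * (t * Real.exp (-(z.re * t))) := by
          rw [norm_mul,
            Complex.norm_cpow_eq_rpow_re_of_pos ht', norm_mul, norm_neg, Complex.norm_exp]
          simp [Complex.norm_real, abs_of_pos ht', Complex.neg_re, Complex.mul_re]
      _ ≤ t ^ s * (t * Real.exp (-(ε * t))) := by
          have hee : Real.exp (-(z.re*t)) ≤ Real.exp (-(ε*t)) := by
            apply Real.exp_le_exp.mpr; nlinarith
          have h0 : (0:ℝ) < t ^ s := Real.rpow_pos_of_pos ht' s
          have := mul_le_mul_of_nonneg_left hee ht'.le
          exact mul_le_mul_of_nonneg_left this h0.le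
      _ = t ^ (s+1) * Real.exp (-(ε * t)) := by
          rw [Real.rpow_add ht', Real.rpow_one]; ring
  · exact aux_int_rpow_exp (by linarith) hεpos
  · -- differentiability
    filter_upwards [ae_restrict_mem measurableSet_Ioi] with t ht z hz
    have h1 : HasDerivAt (fun z : ℂ => -(z * (t:ℂ))) (-(t:ℂ)) z := by
      exact (hasDerivAt_mul_const (t:ℂ)).neg
    have h2 := h1.cexp
    have h3 := h2.const_mul ((t:ℂ) ^ (s:ℂ))
    convert h3 using 1
    rfl
    ring

lemma gammaK {s : ℝ} (hs : 0 < s) {z : ℂ} (hz : 0 < z.re) :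
    (∫ t in Set.Ioi (0:ℝ), (t:ℂ) ^ (s:ℂ) * Complex.exp (-(z * t))) =
      Complex.Gamma ((s:ℂ)+1) * z ^ (-((s:ℂ)+1)) := by
  set U : Set ℂ := {w : ℂ | 0 < w.re} with hU
  have hUo : IsOpen U := isOpen_lt continuous_const Complex.continuous_re
  have hUp : IsPreconnected U := (convex_halfSpace_re_gt 0).isPreconnected
  set F : ℂ → ℂ := fun w => ∫ t in Set.Ioi (0:ℝ), (t:ℂ) ^ (s:ℂ) * Complex.exp (-(w * t)) with hF
  set G : ℂ → ℂ := fun w => Complex.Gamma ((s:ℂ)+1) * w ^ (-((s:ℂ)+1)) with hG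
  have hFa : AnalyticOnNhd ℂ F U := by
    refine DifferentiableOn.analyticOnNhd (fun w hw => ?_) hUo
    exact ((aux_hasDerivAt s hs hw).differentiableAt).differentiableWithinAt
  have hGa : AnalyticOnNhd ℂ G U := by
    refine DifferentiableOn.analyticOnNhd (fun w hw => ?_) hUo
    refine DifferentiableAt.differentiableWithinAt ?_
    refine (differentiableAt_const _).mul ?_
    exact differentiableAt_id.cpow (differentiableAt_const _) (Or.inl hw)
  have hreal : ∀ r : ℝ, 0 < r → F (r:ℂ) = G (r:ℂ) := by
    intro r hr
    have ha : 0 < ((s:ℂ)+1).re := by simp; linarith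
    have h1 := integral_cpow_mul_exp_neg_mul_Ioi (a := (s:ℂ)+1) ha hr
    rw [add_sub_cancel_right] at h1
    have harg : ((r:ℂ)).arg ≠ π := by
      rw [Complex.arg_ofReal_of_nonneg hr.le]
      exact Ne.symm Real.pi_ne_zero
    rw [hF, hG]
    simp only
    rw [h1, one_div, Complex.inv_cpow _ _ harg, ← Complex.cpow_neg, mul_comm]
  have h1mem : (1:ℂ) ∈ U := by simp [hU]
  have hfreq : ∃ᶠ w in nhdsWithin (1:ℂ) {(1:ℂ)}ᶜ, F w = G w := by
    have htend : Tendsto (fun n : ℕ => ((1 + (n+1:ℝ)⁻¹ : ℝ) : ℂ)) atTop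
        (nhdsWithin 1 {(1:ℂ)}ᶜ) := by
      rw [tendsto_nhdsWithin_iff]
      constructor
      · have h2 : Tendsto (fun n : ℕ => (1 + (n+1:ℝ)⁻¹ : ℝ)) atTop (nhds 1) := by
          have h0 : Tendsto (fun n : ℕ => ((n:ℝ)+1)⁻¹) atTop (nhds 0) := by
            simpa [one_div] using tendsto_one_div_add_atTop_nhds_zero_nat (𝕜 := ℝ)
          simpa using (tendsto_const_nhds (x := (1:ℝ)) (f := atTop)).add h0
        have h5 := (Complex.continuous_ofReal.tendsto 1).comp h2
        exact h5
      · filter_upwards with n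
        simp only [mem_compl_iff, mem_singleton_iff]
        intro h
        have h3 : (1 + (n+1:ℝ)⁻¹ : ℝ) = 1 := by exact_mod_cast h
        have h4 : (0:ℝ) < (n+1:ℝ)⁻¹ := by positivity
        linarith
    refine htend.frequently (Frequently.of_forall fun n => ?_)
    exact hreal _ (by positivity)
  exact hFa.eqOn_of_preconnected_of_frequently_eq hGa hUp h1mem hfreq hz

def gfun (s : ℝ) : ℝ → ℂ :=
  (Set.Ioi (0:ℝ)).indicator fun t => (t:ℂ) ^ (s:ℂ) * Complex.exp (-((1:ℂ) * t))

lemma gfun_fourier {s : ℝ} (hs : 0 < s) (w : ℝ) :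
    𝓕 (gfun s) w = Complex.Gamma ((s:ℂ)+1) *
      ((1:ℂ) + ((2*π*w : ℝ) : ℂ) * Complex.I) ^ (-((s:ℂ)+1)) := by
  have hzre : 0 < ((1:ℂ) + ((2*π*w : ℝ) : ℂ) * Complex.I).re := by simp
  calc 𝓕 (gfun s) w
      = ∫ v : ℝ, Complex.exp (↑(-2 * π * v * w) * Complex.I) • gfun s v :=
        Real.fourier_real_eq_integral_exp_smul _ _
    _ = ∫ v in Set.Ioi (0:ℝ), (v:ℂ) ^ (s:ℂ) *
          Complex.exp (-(((1:ℂ) + ((2*π*w : ℝ) : ℂ) * Complex.I) * v)) := by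
        rw [← MeasureTheory.integral_indicator measurableSet_Ioi]
        congr 1
        funext v
        by_cases hv : v ∈ Set.Ioi (0:ℝ)
        · rw [Set.indicator_of_mem hv, gfun, Set.indicator_of_mem hv, smul_eq_mul]
          have h1 : Complex.exp (↑(-2 * π * v * w) * Complex.I) *
              ((v:ℂ) ^ (s:ℂ) * Complex.exp (-((1:ℂ) * v))) =
              (v:ℂ) ^ (s:ℂ) * (Complex.exp (↑(-2 * π * v * w) * Complex.I) *
                Complex.exp (-((1:ℂ) * v))) := by ring
          rw [h1, ← Complex.exp_add]
          congr 2
          push_cast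
          ring
        · rw [Set.indicator_of_notMem hv, gfun, Set.indicator_of_notMem hv, smul_zero]
    _ = _ := gammaK hs hzre

lemma gfun_fourierInv {s : ℝ} (hs : 0 < s) (y : ℝ) :
    𝓕⁻ (gfun s) y = Complex.Gamma ((s:ℂ)+1) *
      ((1:ℂ) + ((2*π*(-y) : ℝ) : ℂ) * Complex.I) ^ (-((s:ℂ)+1)) := by
  rw [Real.fourierInv_eq_fourier_neg, gfun_fourier hs]

lemma gfun_integrable {s : ℝ} (hs : 0 < s) : Integrable (gfun s) := by
  rw [gfun, integrable_indicator_iff measurableSet_Ioi]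
  exact aux_integrableOn_cpow_exp hs (by simp)

lemma aux_norm_fourier_gfun {s : ℝ} (hs : 1 < s) (w : ℝ) :
    ‖𝓕 (gfun s) w‖ ≤ ‖Complex.Gamma ((s:ℂ)+1)‖ * (2 * (1 + w^2)⁻¹) := by
  rw [gfun_fourier (by linarith) w, norm_mul]
  refine mul_le_mul_of_nonneg_left ?_ (norm_nonneg _)
  set z : ℂ := (1:ℂ) + ((2*π*w : ℝ) : ℂ) * Complex.I with hzdef
  have hzre : z.re = 1 := by simp [hzdef]
  have hzim : z.im = 2*π*w := by simp [hzdef]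
  have hz0 : z ≠ 0 := by
    intro h; rw [h] at hzre; simp at hzre
  set r : ℝ := ‖z‖ with hr
  have h1r : 1 ≤ r := by
    have := Complex.abs_re_le_norm z
    rw [hzre] at this; simpa using this
  have hnorm : ‖z ^ (-((s:ℂ)+1))‖ = r ^ (-(s+1)) := by
    rw [Complex.norm_cpow_of_ne_zero hz0]
    have h1 : (-((s:ℂ)+1)).re = -(s+1) := by simp
    have h2 : (-((s:ℂ)+1)).im = 0 := by simp
    rw [h1, h2, mul_zero, Real.exp_zero, div_one]
  rw [hnorm]
  have step1 : r ^ (-(s+1)) ≤ r ^ (-(2:ℝ)) :=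
    Real.rpow_le_rpow_of_exponent_le h1r (by linarith)
  have step2 : r ^ (-(2:ℝ)) = (r^2)⁻¹ := by
    rw [Real.rpow_neg (by linarith), show ((2:ℝ)) = ((2:ℕ):ℝ) by norm_num,
      Real.rpow_natCast]
  have step3 : r^2 = 1 + (2*π*w)^2 := by
    rw [hr, Complex.sq_norm, Complex.normSq_apply, hzre, hzim]; ring
  have hB : (0:ℝ) < 1 + w^2 := by positivity
  have hA : (0:ℝ) < 1 + (2*π*w)^2 := by positivity
  have step4 : (1 + (2*π*w)^2)⁻¹ ≤ 2 * (1 + w^2)⁻¹ := by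
    rw [show (2:ℝ) * (1 + w^2)⁻¹ = ((1 + w^2)/2)⁻¹ by rw [inv_div]; ring]
    apply inv_anti₀ (by positivity)
    have h9 : (9:ℝ) ≤ π^2 := by nlinarith [Real.pi_gt_three]
    nlinarith [mul_le_mul_of_nonneg_right h9 (sq_nonneg w), sq_nonneg w]
  calc r ^ (-(s+1)) ≤ r ^ (-(2:ℝ)) := step1
    _ = (1 + (2*π*w)^2)⁻¹ := by rw [step2, step3]
    _ ≤ 2 * (1 + w^2)⁻¹ := step4

lemma gfun_fourier_integrable {s : ℝ} (hs : 1 < s) : Integrable (𝓕 (gfun s)) := by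
  have hcont : Continuous (𝓕 (gfun s)) :=
    VectorFourier.fourierIntegral_continuous Real.continuous_fourierChar
      (by exact continuous_inner) (gfun_integrable (by linarith))
  refine Integrable.mono' ?_ hcont.aestronglyMeasurable
    (Filter.Eventually.of_forall (aux_norm_fourier_gfun hs))
  exact (integrable_inv_one_add_sq.const_mul 2).const_mul _

lemma gfun_continuousAt {s : ℝ} (hs : 0 < s) {ξ : ℝ} (hξ : 0 < ξ) :
    ContinuousAt (gfun s) ξ := by
  have hc : ContinuousAt (fun t : ℝ => (t:ℂ) ^ (s:ℂ) * Complex.exp (-((1:ℂ) * t))) ξ := by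
    refine ContinuousAt.mul ?_ ?_
    · exact continuousAt_ofReal_cpow_const _ _ (Or.inr hξ.ne')
    · exact (Complex.continuous_exp.comp (by continuity)).continuousAt
  refine hc.congr ?_
  filter_upwards [Ioi_mem_nhds hξ] with t ht
  simp only [gfun, Set.indicator_of_mem ht]

lemma gfun_inversion {s : ℝ} (hs : 1 < s) {ξ : ℝ} (hξ : 0 < ξ) :
    𝓕 (𝓕⁻ (gfun s)) ξ = gfun s ξ :=
  MeasureTheory.Integrable.fourier_fourierInv_eq (gfun_integrable (by linarith))
    (gfun_fourier_integrable hs) (gfun_continuousAt (by linarith) hξ)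

lemma aux_mul_cpow {b : ℂ} (hb : 0 < b.re) (c : ℂ) :
    (Complex.I * b) ^ c = Complex.I ^ c * b ^ c := by
  have hb0 : b ≠ 0 := by intro h; rw [h] at hb; simp at hb
  have hI : Complex.I ≠ 0 := Complex.I_ne_zero
  have harg : Complex.I.arg + b.arg ∈ Set.Ioc (-π) π := by
    rw [Complex.arg_I]
    have h := abs_lt.mp (Complex.abs_arg_lt_pi_div_two_iff.mpr (Or.inl hb))
    constructor
    · linarith [Real.pi_pos]
    · linarith
  rw [Complex.cpow_def_of_ne_zero (mul_ne_zero hI hb0), Complex.cpow_def_of_ne_zero hI,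
    Complex.cpow_def_of_ne_zero hb0, Complex.log_mul hI hb0 harg, add_mul, Complex.exp_add]

lemma fourier_const_mul (c : ℂ) (f : ℝ → ℂ) (ξ : ℝ) :
    𝓕 (fun x : ℝ => c * f x) ξ = c * 𝓕 f ξ := by
  rw [Real.fourier_real_eq_integral_exp_smul,
    Real.fourier_real_eq_integral_exp_smul, ← MeasureTheory.integral_const_mul]
  congr 1
  funext v
  simp only [smul_eq_mul]
  ring

lemma psiW_eq {s : ℝ} (hs : 0 < s) (y : ℝ) :
    psiW s (2*π*y) =
      (Complex.I ^ (-((s:ℂ)+1)) / Complex.Gamma ((s:ℂ)+1)) * 𝓕⁻ (gfun s) y := by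
  rw [gfun_fourierInv hs y]
  set b : ℂ := (1:ℂ) + ((2*π*(-y) : ℝ) : ℂ) * Complex.I with hb
  have hbre : 0 < b.re := by simp [hb]
  have hbase : ((2*π*y : ℝ) : ℂ) + Complex.I = Complex.I * b := by
    rw [hb]; push_cast; ring_nf; rw [Complex.I_sq]; ring
  have hΓ : Complex.Gamma ((s:ℂ)+1) ≠ 0 :=
    Complex.Gamma_ne_zero_of_re_pos (by simp; linarith)
  show (((2*π*y : ℝ) : ℂ) + Complex.I) ^ (-((s:ℂ)+1)) = _
  rw [hbase, aux_mul_cpow hbre]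
  field_simp

lemma fourierT_psiW {s : ℝ} (hs : 1 < s) {ξ : ℝ} (hξ : 0 < ξ) :
    fourierT (psiW s) ξ =
      ((2*π : ℝ) : ℂ) * ((Complex.I ^ (-((s:ℂ)+1)) / Complex.Gamma ((s:ℂ)+1)) * gfun s ξ) := by
  have hπ : (0:ℝ) < 2*π := by positivity
  have hcv := MeasureTheory.Measure.integral_comp_mul_left
    (g := fun x : ℝ => psiW s x * Complex.exp (-(Complex.I * x * ξ))) (a := 2*π)
  have h1 : (∫ x : ℝ, psiW s x * Complex.exp (-(Complex.I * x * ξ)))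
      = (2*π : ℝ) • ∫ x : ℝ, psiW s (2*π*x) *
          Complex.exp (-(Complex.I * ((2*π*x : ℝ) : ℂ) * ξ)) := by
    rw [hcv, smul_smul, abs_of_pos (inv_pos.mpr hπ), mul_inv_cancel₀ hπ.ne', one_smul]
  have h2 : (∫ x : ℝ, psiW s (2*π*x) *
          Complex.exp (-(Complex.I * ((2*π*x : ℝ) : ℂ) * ξ)))
      = 𝓕 (fun x : ℝ => (Complex.I ^ (-((s:ℂ)+1)) / Complex.Gamma ((s:ℂ)+1)) *
          𝓕⁻ (gfun s) x) ξ := by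
    rw [Real.fourier_real_eq_integral_exp_smul]
    congr 1
    funext x
    rw [← psiW_eq (by linarith) x, smul_eq_mul, mul_comm]
    have harg : (-(Complex.I * ((2*π*x : ℝ) : ℂ) * ξ)) = ((-2*π*x*ξ : ℝ) : ℂ) * Complex.I := by
      push_cast; ring
    rw [harg]
  show (∫ x : ℝ, psiW s x * Complex.exp (-(Complex.I * x * ξ))) = _
  rw [h1, h2, fourier_const_mul, gfun_inversion hs hξ]
  rw [Complex.real_smul]

lemma norm_fourierT_psiW {s : ℝ} (hs : 1 < s) {ξ : ℝ} (hξ : 0 < ξ) :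
    ‖fourierT (psiW s) ξ‖ =
      2*π / ‖Complex.Gamma ((s:ℂ)+1)‖ * (ξ ^ s * Real.exp (-ξ)) := by
  rw [fourierT_psiW hs hξ, norm_mul, norm_mul, norm_div]
  have h1 : ‖((2*π : ℝ) : ℂ)‖ = 2*π := by
    rw [Complex.norm_real, Real.norm_eq_abs, abs_of_pos Real.two_pi_pos]
  have h2 : ‖Complex.I ^ (-((s:ℂ)+1))‖ = 1 := by
    rw [Complex.cpow_def_of_ne_zero Complex.I_ne_zero, Complex.log_I]
    rw [Complex.norm_exp]
    have hre : ((↑π / 2 * Complex.I) * (-((s:ℂ)+1))).re = 0 := by simp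
    rw [hre, Real.exp_zero]
  have h3 : ‖gfun s ξ‖ = ξ ^ s * Real.exp (-ξ) := by
    have hmem : ξ ∈ Set.Ioi (0:ℝ) := hξ
    have hval : gfun s ξ = (ξ:ℂ) ^ (s:ℂ) * Complex.exp (-((1:ℂ) * ξ)) := by
      simp only [gfun, Set.indicator_of_mem hmem]
    rw [hval, aux_norm_cpow_exp s 1 hξ]
    norm_num
  rw [h1, h2, h3]
  ring

lemma const_eq (s : ℝ) :
    ‖2 * (π:ℂ) * Complex.exp ((π:ℂ) * Complex.I * ((s:ℂ)+1)/2) / Complex.Gamma ((s:ℂ)+1)‖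
      = 2*π / ‖Complex.Gamma ((s:ℂ)+1)‖ := by
  rw [norm_div, norm_mul, norm_mul]
  have h2 : ‖Complex.exp ((π:ℂ) * Complex.I * ((s:ℂ)+1)/2)‖ = 1 := by
    have harg : (π:ℂ) * Complex.I * ((s:ℂ)+1)/2 = ((π*(s+1)/2 : ℝ) : ℂ) * Complex.I := by
      push_cast; ring
    rw [harg, Complex.norm_exp]
    have : (((π*(s+1)/2 : ℝ) : ℂ) * Complex.I).re = 0 := by simp
    rw [this, Real.exp_zero]
  rw [h2]
  simp [Complex.norm_real, abs_of_pos Real.pi_pos]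

theorem admissibility_psiW (s : ℝ) (hs : 1 < s) :
    IntegrableOn (fun ξ : ℝ => ‖fourierT (psiW s) ξ‖ ^ 2 / ξ) (Set.Ioi 0) ∧
    ∫ ξ in Set.Ioi (0 : ℝ), ‖fourierT (psiW s) ξ‖ ^ 2 / ξ =
      ‖2 * (π : ℂ) * Complex.exp ((π : ℂ) * Complex.I * ((s : ℂ) + 1) / 2) /
          Complex.Gamma ((s : ℂ) + 1)‖ ^ 2 * (2 : ℝ) ^ (-2 * s) * Real.Gamma (2 * s) := by
  set A : ℝ := ‖2 * (π : ℂ) * Complex.exp ((π : ℂ) * Complex.I * ((s : ℂ) + 1) / 2) /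
      Complex.Gamma ((s : ℂ) + 1)‖ ^ 2 with hA
  have hpt : ∀ ξ ∈ Set.Ioi (0:ℝ), ‖fourierT (psiW s) ξ‖ ^ 2 / ξ
      = A * (ξ ^ (2*s - 1) * Real.exp (-(2*ξ))) := by
    intro ξ hξ
    have hξ' : (0:ℝ) < ξ := hξ
    rw [norm_fourierT_psiW hs hξ', hA, const_eq, mul_pow]
    have e1 : (ξ ^ s * Real.exp (-ξ))^2 = ξ ^ (2*s) * Real.exp (-(2*ξ)) := by
      calc (ξ ^ s * Real.exp (-ξ))^2
          = (ξ ^ s * ξ ^ s) * (Real.exp (-ξ) * Real.exp (-ξ)) := by ring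
        _ = ξ ^ (2*s) * Real.exp (-(2*ξ)) := by
            rw [← Real.rpow_add hξ', ← Real.exp_add]
            congr 1 <;> ring
    have e2 : ξ ^ (2*s) / ξ = ξ ^ (2*s - 1) := by
      rw [Real.rpow_sub hξ', Real.rpow_one]
    rw [e1, mul_div_assoc,
      show ξ ^ (2*s) * Real.exp (-(2*ξ)) / ξ = ξ ^ (2*s) / ξ * Real.exp (-(2*ξ)) from by ring,
      e2]
  constructor
  · have hint : IntegrableOn (fun ξ : ℝ => A * (ξ ^ (2*s-1) * Real.exp (-(2*ξ))))
        (Set.Ioi 0) := (aux_int_rpow_exp (by linarith) (by norm_num)).const_mul A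
    exact IntegrableOn.congr_fun hint (fun ξ hξ => (hpt ξ hξ).symm) measurableSet_Ioi
  · rw [MeasureTheory.setIntegral_congr_fun measurableSet_Ioi hpt,
      MeasureTheory.integral_const_mul,
      Real.integral_rpow_mul_exp_neg_mul_Ioi (by linarith : (0:ℝ) < 2*s) (by norm_num : (0:ℝ) < 2)]
    have e3 : ((1:ℝ)/2) ^ (2*s) = (2:ℝ) ^ (-(2*s)) := by
      rw [Real.rpow_neg (by norm_num : (0:ℝ) ≤ 2), one_div,
        Real.inv_rpow (by norm_num : (0:ℝ) ≤ 2)]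
    rw [e3, show -2*s = -(2*s) by ring]
    ring
end
end

section
/- Let ρ > 1 be a real number and let z ∈ ℂ with Im(z) ≠ 0. Then ∫_ℝ sin(t)/(t − z)^ρ dt = (π e^{iπ(ρ−1)/2}/Γ(ρ)) e^{iz} if Im(z) > 0, and ∫_ℝ sin(t)/(t − z)^ρ dt = (π e^{−iπ(ρ−1)/2}/Γ(ρ)) e^{−iz} if Im(z) < 0. -/
open scoped Real MatrixGroups
open Filter MeasureTheory UpperHalfPlane

noncomputable section

section IntegralSinDivPow

open MeasureTheory Set Complex Filter FourierTransform Real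

lemma myAuxInt {c δ : ℝ} (hc : 0 < c) (hδ : 0 < δ) :
    IntegrableOn (fun t : ℝ => t ^ (c - 1) * Real.exp (-(δ * t))) (Ioi 0) := by
  have h0 := Real.GammaIntegral_convergent hc
  have h1 : IntegrableOn (fun t : ℝ => Real.exp (-(δ * t)) * (δ * t) ^ (c - 1)) (Ioi 0) := by
    have := (integrableOn_Ioi_comp_mul_left_iff
      (fun x : ℝ => Real.exp (-x) * x ^ (c - 1)) 0 hδ).2 (by simpa using h0)
    simpa using this
  have h2 := h1.const_mul (δ ^ (1 - c))
  apply (IntegrableOn.congr_fun h2 ?_ measurableSet_Ioi)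
  intro t ht
  rw [mem_Ioi] at ht
  simp only []
  rw [Real.mul_rpow hδ.le ht.le]
  have : δ ^ (1 - c) * (Real.exp (-(δ * t)) * (δ ^ (c-1) * t ^ (c-1)))
      = (δ ^ (1-c) * δ ^ (c-1)) * (t ^ (c-1) * Real.exp (-(δ*t))) := by ring
  rw [this, ← Real.rpow_add hδ]
  norm_num

lemma myContOn {ρ : ℝ} (x : ℂ) : ContinuousOn
    (fun t : ℝ => (t : ℂ) ^ ((ρ:ℂ) - 1) * Complex.exp (-(x * t))) (Ioi 0) := by
  apply ContinuousOn.mul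
  · intro t ht
    have : ContinuousAt (fun t : ℝ => (t : ℂ) ^ ((ρ:ℂ) - 1)) t := by
      apply (continuousAt_cpow_const ?_).comp Complex.continuous_ofReal.continuousAt
      exact Complex.mem_slitPlane_iff.2 (Or.inl (by simpa using ht))
    exact this.continuousWithinAt
  · apply Continuous.continuousOn
    exact Complex.continuous_exp.comp ((continuous_const.mul Complex.continuous_ofReal).neg)

lemma myNorm {ρ : ℝ} {t : ℝ} (ht : 0 < t) (x : ℂ) :
    ‖(t : ℂ) ^ ((ρ:ℂ) - 1) * Complex.exp (-(x * t))‖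
      = t ^ (ρ - 1) * Real.exp (-(x.re * t)) := by
  rw [norm_mul,
    Complex.norm_cpow_eq_rpow_re_of_pos ht, Complex.norm_exp]
  simp [Complex.mul_re]

lemma myGammaIntegral {ρ : ℝ} (hρ : 0 < ρ) {b : ℂ} (hb : 0 < b.re) :
    ∫ t in Ioi (0:ℝ), (t : ℂ) ^ ((ρ:ℂ) - 1) * Complex.exp (-(b * t)) =
      Complex.Gamma ρ * b ^ (-(ρ:ℂ)) := by
  have hU : IsOpen {z : ℂ | 0 < z.re} := isOpen_lt continuous_const Complex.continuous_re
  set G : ℂ → ℂ := fun b => ∫ t in Ioi (0:ℝ), (t : ℂ) ^ ((ρ:ℂ) - 1) * Complex.exp (-(b * t))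
    with hG
  set H : ℂ → ℂ := fun b => Complex.Gamma ρ * b ^ (-(ρ:ℂ)) with hH
  have meas : ∀ x : ℂ, AEStronglyMeasurable
      (fun t : ℝ => (t : ℂ) ^ ((ρ:ℂ) - 1) * Complex.exp (-(x * t)))
      (volume.restrict (Ioi 0)) :=
    fun x => (myContOn x).aestronglyMeasurable measurableSet_Ioi
  have hInt : ∀ x : ℂ, 0 < x.re → Integrable
      (fun t : ℝ => (t : ℂ) ^ ((ρ:ℂ) - 1) * Complex.exp (-(x * t)))
      (volume.restrict (Ioi 0)) := by
    intro x hx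
    refine Integrable.mono' (myAuxInt hρ hx) (meas x) ?_
    filter_upwards [ae_restrict_mem measurableSet_Ioi] with t ht
    rw [myNorm ht x]
  have hGdiff : DifferentiableOn ℂ G {z : ℂ | 0 < z.re} := by
    intro c hc
    rw [mem_setOf_eq] at hc
    have key := hasDerivAt_integral_of_dominated_loc_of_deriv_le
      (F := fun (x : ℂ) (t : ℝ) => (t : ℂ) ^ ((ρ:ℂ) - 1) * Complex.exp (-(x * t)))
      (F' := fun (x : ℂ) (t : ℝ) =>
        (t : ℂ) ^ ((ρ:ℂ) - 1) * Complex.exp (-(x * t)) * (-(t:ℂ)))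
      (μ := volume.restrict (Ioi 0)) (x₀ := c)
      (bound := fun t : ℝ => t ^ ((ρ + 1) - 1) * Real.exp (-(c.re / 2 * t)))
      (Metric.ball_mem_nhds c (half_pos hc)) (Eventually.of_forall meas) (hInt c hc)
      ((meas c).mul (Complex.continuous_ofReal.neg.aestronglyMeasurable))
      ?_ (myAuxInt (by linarith) (by linarith)) ?_
    · exact key.2.differentiableAt.differentiableWithinAt
    · filter_upwards [ae_restrict_mem measurableSet_Ioi] with t ht x hx
      rw [mem_Ioi] at ht
      rw [norm_mul, myNorm ht x]
      have hxre : c.re / 2 ≤ x.re := by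
        have := abs_le.1 (abs_re_le_norm (x - c)) |>.1
        have h2 : ‖x - c‖ < c.re / 2 := by
          simpa [Complex.dist_eq] using Metric.mem_ball.1 hx
        simp only [Complex.sub_re] at this
        nlinarith [neg_abs_le (x.re - c.re), abs_re_le_norm (x-c)]
      have h3 : ‖-(t:ℂ)‖ = t := by simp [abs_of_pos ht]
      rw [h3]
      have h4 : t ^ (ρ - 1) * Real.exp (-(x.re * t)) * t
          = t ^ ((ρ+1) - 1) * Real.exp (-(x.re * t)) := by
        rw [show (ρ+1) - 1 = (ρ - 1) + 1 by ring, Real.rpow_add ht, Real.rpow_one]; ring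
      rw [h4]
      have : Real.exp (-(x.re * t)) ≤ Real.exp (-(c.re / 2 * t)) := by
        apply Real.exp_le_exp.2; nlinarith
      have hpow : (0:ℝ) ≤ t ^ ((ρ+1)-1) := (Real.rpow_pos_of_pos ht _).le
      nlinarith [Real.exp_pos (-(x.re * t)), Real.exp_pos (-(c.re/2 * t))]
    · filter_upwards [ae_restrict_mem measurableSet_Ioi] with t ht x _
      have : HasDerivAt (fun x : ℂ => -(x * t)) (-(t:ℂ)) x :=
        ((hasDerivAt_id x).mul_const (t:ℂ)).neg.congr_deriv (by simp)
      exact ((this.cexp).const_mul _).congr_deriv (by ring)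
  have hHdiff : DifferentiableOn ℂ H {z : ℂ | 0 < z.re} := by
    intro c hc
    rw [mem_setOf_eq] at hc
    exact (((hasDerivAt_id c).cpow_const (Complex.mem_slitPlane_iff.2 (Or.inl hc))).differentiableAt.const_mul
      _).differentiableWithinAt
  have hfreq : ∃ᶠ z in nhdsWithin (1:ℂ) {(1:ℂ)}ᶜ, G z = H z := by
    have hseq : Tendsto (fun n : ℕ => ((1 + ((n:ℝ)+1)⁻¹ : ℝ) : ℂ)) atTop
        (nhdsWithin (1:ℂ) {(1:ℂ)}ᶜ) := by
      rw [tendsto_nhdsWithin_iff]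
      constructor
      · have h0 : Tendsto (fun n : ℕ => (1 + ((n:ℝ)+1)⁻¹ : ℝ)) atTop (nhds 1) := by
          have := tendsto_one_div_add_atTop_nhds_zero_nat (𝕜 := ℝ)
          simp only [one_div] at this
          simpa using tendsto_const_nhds.add this
        have := (Complex.continuous_ofReal.tendsto (1:ℝ)).comp h0
        simpa [Function.comp_def] using this
      · filter_upwards with n
        simp only [mem_compl_iff, mem_singleton_iff]
        intro h
        rw [show (1:ℂ) = ((1:ℝ):ℂ) by norm_num] at h
        have := Complex.ofReal_injective h
        have hp : (0:ℝ) < ((n:ℝ)+1)⁻¹ := by positivity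
        linarith
    refine hseq.frequently (Frequently.of_forall fun n => ?_)
    have hr : (0:ℝ) < 1 + ((n:ℝ)+1)⁻¹ := by positivity
    set r : ℝ := 1 + ((n:ℝ)+1)⁻¹
    have := Complex.integral_cpow_mul_exp_neg_mul_Ioi
      (a := (ρ:ℂ)) (r := r) (by simpa using hρ) hr
    rw [hG, hH]
    simp only []
    rw [this]
    have harg : Complex.arg (r:ℂ) ≠ Real.pi := by
      rw [Complex.arg_ofReal_of_nonneg hr.le]
      exact Real.pi_ne_zero.symm
    rw [one_div, Complex.inv_cpow _ _ harg, ← Complex.cpow_neg]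
    ring
  have hpre : IsPreconnected {z : ℂ | 0 < z.re} := (convex_halfSpace_re_gt 0).isPreconnected
  have := (hGdiff.analyticOnNhd hU).eqOn_of_preconnected_of_frequently_eq
    (hHdiff.analyticOnNhd hU) hpre (by simp : (1:ℂ) ∈ {z : ℂ | 0 < z.re}) hfreq
  exact this hb

lemma myIntegrableCpow {ρ : ℝ} (hρ : 1 < ρ) {z : ℂ} (hz : z.im ≠ 0) :
    Integrable (fun t : ℝ => ((t:ℂ) - z) ^ (-(ρ:ℂ))) := by
  have him : ∀ t : ℝ, ((t:ℂ) - z).im ≠ 0 := fun t => by simpa using hz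
  have hcont : Continuous (fun t : ℝ => ((t:ℂ) - z) ^ (-(ρ:ℂ))) := by
    rw [continuous_iff_continuousAt]
    intro t
    have h1 : ContinuousAt (fun w : ℂ => w ^ (-(ρ:ℂ))) ((t:ℂ) - z) :=
      continuousAt_cpow_const (Complex.mem_slitPlane_iff.2 (Or.inr (him t)))
    exact ContinuousAt.comp (x := t) (g := fun w : ℂ => w ^ (-(ρ:ℂ)))
      (f := fun x : ℝ => (x:ℂ) - z) h1
      ((Complex.continuous_ofReal.sub continuous_const).continuousAt)
  have habs : 0 < |z.im| := abs_pos.2 hz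
  set c : ℝ := min 1 |z.im| / 2 with hc
  have hc0 : 0 < c := by positivity
  have h1 : Integrable (fun x : ℝ => (1 + ‖x‖) ^ (-ρ)) :=
    integrable_one_add_norm (by simpa using hρ)
  have hmaj : Integrable (fun t : ℝ => c ^ (-ρ) * (1 + ‖t - z.re‖) ^ (-ρ)) :=
    (h1.comp_sub_right z.re).const_mul _
  refine hmaj.mono' hcont.aestronglyMeasurable ?_
  filter_upwards with t
  have hne : ((t:ℂ) - z) ≠ 0 := fun h => him t (by rw [h]; simp)
  have key : c * (1 + ‖t - z.re‖) ≤ ‖(t:ℂ) - z‖ := by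
    have h2 : |((t:ℂ) - z).im| ≤ ‖(t:ℂ) - z‖ := Complex.abs_im_le_norm _
    have h3 : |((t:ℂ) - z).re| ≤ ‖(t:ℂ) - z‖ := Complex.abs_re_le_norm _
    have e2 : ((t:ℂ) - z).im = -z.im := by simp
    have e3 : ((t:ℂ) - z).re = t - z.re := by simp
    rw [e2, abs_neg] at h2
    rw [e3] at h3
    have hc1 : c ≤ 1/2 := by rw [hc]; have := min_le_left 1 |z.im|; linarith
    have hc2 : c ≤ |z.im|/2 := by rw [hc]; have := min_le_right 1 |z.im|; linarith
    have : ‖t - z.re‖ = |t - z.re| := rfl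
    rw [this]
    nlinarith [abs_nonneg (t - z.re)]
  calc ‖((t:ℂ) - z) ^ (-(ρ:ℂ))‖ = ‖(t:ℂ) - z‖ ^ (-ρ) := by
        rw [show (-(ρ:ℂ)) = ((-ρ : ℝ) : ℂ) by push_cast; ring,
          Complex.norm_cpow_real]
    _ ≤ (c * (1 + ‖t - z.re‖)) ^ (-ρ) := by
        apply Real.rpow_le_rpow_of_nonpos ?_ key (by linarith)
        positivity
    _ = c ^ (-ρ) * (1 + ‖t - z.re‖) ^ (-ρ) := by
        rw [Real.mul_rpow hc0.le (by positivity)]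

lemma myMulCpow_s12 {w : ℂ} (hw : w.im < 0) (t : ℂ) :
    (Complex.I * w) ^ t = Complex.I ^ t * w ^ t := by
  have hw0 : w ≠ 0 := fun h => by simp [h] at hw
  have hIw : Complex.I * w ≠ 0 := mul_ne_zero Complex.I_ne_zero hw0
  have harg : Complex.arg Complex.I + Complex.arg w ∈ Ioc (-π) π := by
    rw [Complex.arg_I]
    have h1 : Complex.arg w < 0 := Complex.arg_neg_iff.2 hw
    have h2 : -π < Complex.arg w := Complex.neg_pi_lt_arg w
    constructor <;> [nlinarith [Real.pi_pos]; nlinarith [Real.pi_pos]]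
  rw [Complex.cpow_def_of_ne_zero hIw, Complex.cpow_def_of_ne_zero Complex.I_ne_zero,
    Complex.cpow_def_of_ne_zero hw0, Complex.log_mul Complex.I_ne_zero hw0 harg,
    ← Complex.exp_add, add_mul]

noncomputable def myg (ρ : ℝ) (z : ℂ) : ℝ → ℂ :=
  Set.indicator (Ioi (0:ℝ))
    (fun u : ℝ => (u:ℂ) ^ ((ρ:ℂ) - 1) * Complex.exp (-((-Complex.I * z) * u)))

lemma myg_integrable {ρ : ℝ} (hρ : 1 < ρ) {z : ℂ} (hz : 0 < z.im) :
    Integrable (myg ρ z) := by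
  rw [myg, integrable_indicator_iff measurableSet_Ioi]
  have hx : (-Complex.I * z).re = z.im := by simp
  refine Integrable.mono' (myAuxInt (by linarith : (0:ℝ) < ρ) hz)
    ((myContOn (-Complex.I*z)).aestronglyMeasurable measurableSet_Ioi) ?_
  filter_upwards [ae_restrict_mem measurableSet_Ioi] with t ht
  rw [myNorm ht, hx]

lemma myFg {ρ : ℝ} (hρ : 1 < ρ) {z : ℂ} (hz : 0 < z.im) (ξ : ℝ) :
    𝓕 (myg ρ z) ξ = Complex.Gamma ρ * (Complex.I ^ ((ρ:ℂ)))⁻¹ *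
      (((2*π*ξ : ℝ) : ℂ) - z) ^ (-(ρ:ℂ)) := by
  set w : ℂ := ((2*π*ξ : ℝ) : ℂ) - z with hw
  have hwim : w.im < 0 := by
    have : w.im = -z.im := by rw [hw]; simp
    rw [this]; simpa using hz
  set b : ℂ := Complex.I * w with hb
  have hbre : 0 < b.re := by rw [hb, hw]; simpa [Complex.mul_re] using hz
  rw [Real.fourier_real_eq_integral_exp_smul]
  have step1 : (fun v : ℝ => Complex.exp (↑(-2 * π * v * ξ) * Complex.I) • myg ρ z v)
      = Set.indicator (Ioi (0:ℝ))
        (fun v : ℝ => (v:ℂ) ^ ((ρ:ℂ) - 1) * Complex.exp (-(b * v))) := by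
    funext v
    by_cases hv : v ∈ Ioi (0:ℝ)
    · rw [myg, Set.indicator_of_mem hv, Set.indicator_of_mem hv, smul_eq_mul]
      rw [show Complex.exp (↑(-2 * π * v * ξ) * Complex.I) *
          ((v:ℂ) ^ ((ρ:ℂ) - 1) * Complex.exp (-((-Complex.I * z) * v)))
        = (v:ℂ) ^ ((ρ:ℂ) - 1) * (Complex.exp (↑(-2 * π * v * ξ) * Complex.I) *
            Complex.exp (-((-Complex.I * z) * v))) by ring, ← Complex.exp_add]
      congr 2
      rw [hb, hw]
      push_cast
      ring
    · rw [myg, Set.indicator_of_notMem hv, Set.indicator_of_notMem hv, smul_zero]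
  rw [step1, integral_indicator measurableSet_Ioi,
    myGammaIntegral (by linarith : (0:ℝ) < ρ) hbre, hb, myMulCpow_s12 hwim,
    Complex.cpow_neg Complex.I]
  ring

lemma myFg_integrable {ρ : ℝ} (hρ : 1 < ρ) {z : ℂ} (hz : 0 < z.im) :
    Integrable (𝓕 (myg ρ z)) := by
  have h2π : (2*π : ℝ) ≠ 0 := by positivity
  have h := ((myIntegrableCpow hρ (ne_of_gt hz)).comp_mul_left' h2π).const_mul
    (Complex.Gamma ρ * (Complex.I ^ ((ρ:ℂ)))⁻¹)
  refine h.congr (Eventually.of_forall fun ξ => ?_)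
  rw [myFg hρ hz ξ]

lemma myg_contAt_one {ρ : ℝ} {z : ℂ} : ContinuousAt (myg ρ z) 1 := by
  have heq : (fun u : ℝ => (u:ℂ) ^ ((ρ:ℂ) - 1) * Complex.exp (-((-Complex.I * z) * u)))
      =ᶠ[nhds (1:ℝ)] myg ρ z := by
    filter_upwards [Ioi_mem_nhds (zero_lt_one : (0:ℝ) < 1)] with u hu
    rw [myg, Set.indicator_of_mem hu]
  apply ContinuousAt.congr ?_ heq
  apply ContinuousAt.mul
  · exact continuousAt_ofReal_cpow_const 1 _ (Or.inr one_ne_zero)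
  · exact (Complex.continuous_exp.comp
      ((continuous_const.mul Complex.continuous_ofReal).neg)).continuousAt

lemma myg_contAt_negone {ρ : ℝ} {z : ℂ} : ContinuousAt (myg ρ z) (-1) := by
  have heq : (fun _ : ℝ => (0:ℂ)) =ᶠ[nhds (-1:ℝ)] myg ρ z := by
    filter_upwards [Iio_mem_nhds (by norm_num : (-1:ℝ) < 0)] with u hu
    rw [myg, Set.indicator_of_notMem (by simpa using not_lt.2 (le_of_lt hu))]
  exact ContinuousAt.congr continuousAt_const heq

lemma myKey_s12 {ρ : ℝ} (hρ : 1 < ρ) {z : ℂ} (hz : 0 < z.im) (v : ℝ)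
    (hv : ContinuousAt (myg ρ z) v) :
    ∫ t : ℝ, Complex.exp (Complex.I * v * t) * ((t:ℂ) - z) ^ (-(ρ:ℂ))
      = 2 * π * (Complex.I ^ ((ρ:ℂ)) / Complex.Gamma ρ) * myg ρ z v := by
  have hΓ : Complex.Gamma (ρ:ℂ) ≠ 0 := by
    apply Complex.Gamma_ne_zero
    intro m h
    have := congrArg Complex.re h
    simp at this
    have hm : (0:ℝ) ≤ m := Nat.cast_nonneg m
    linarith
  have hI : Complex.I ^ ((ρ:ℂ)) ≠ 0 := by
    rw [Complex.cpow_def_of_ne_zero Complex.I_ne_zero]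
    exact Complex.exp_ne_zero _
  have h2π : (2*π : ℝ) ≠ 0 := by positivity
  have hinv := (myg_integrable hρ hz).fourierInv_fourier_eq (myFg_integrable hρ hz) hv
  rw [Real.fourierInv_eq'] at hinv
  set C : ℂ := Complex.Gamma ρ * (Complex.I ^ ((ρ:ℂ)))⁻¹ with hC
  set φ : ℝ → ℂ := fun t => Complex.exp (Complex.I * v * t) * ((t:ℂ) - z) ^ (-(ρ:ℂ))
    with hφ
  have step1 : (fun ξ : ℝ => Complex.exp (↑(2 * π * inner ℝ ξ v) * Complex.I) • 𝓕 (myg ρ z) ξ)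
      = fun ξ : ℝ => C * φ ((2*π) * ξ) := by
    funext ξ
    rw [myFg hρ hz ξ, smul_eq_mul, hφ]
    simp only [RCLike.inner_apply, conj_trivial]
    rw [show Complex.exp (↑(2 * π * (v * ξ)) * Complex.I)
        = Complex.exp (Complex.I * v * ((2*π*ξ : ℝ) : ℂ)) by congr 1; push_cast; ring]
    rw [show ((2*π) * ξ : ℝ) = (2*π*ξ : ℝ) by ring]
    ring
  rw [step1] at hinv
  rw [MeasureTheory.integral_const_mul, Measure.integral_comp_mul_left φ (2*π)] at hinv
  have habs : |(2*π : ℝ)⁻¹| = (2*π : ℝ)⁻¹ := abs_of_pos (by positivity)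
  rw [habs, Complex.real_smul] at hinv
  have hC0 : C ≠ 0 := mul_ne_zero hΓ (inv_ne_zero hI)
  have h2πC : ((2*π:ℝ):ℂ) ≠ 0 := Complex.ofReal_ne_zero.2 h2π
  have hfin : (∫ y : ℝ, φ y) = C⁻¹ * ((2*π:ℝ):ℂ) * myg ρ z v := by
    rw [← hinv]
    have h1 : (↑((2 * π : ℝ)⁻¹) : ℂ) = (((2*π:ℝ):ℂ))⁻¹ := by push_cast; ring
    rw [h1]
    rw [show C⁻¹ * ((2*π:ℝ):ℂ) * (C * ((((2*π:ℝ):ℂ))⁻¹ * ∫ y : ℝ, φ y))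
        = (C⁻¹ * C) * (((2*π:ℝ):ℂ) * (((2*π:ℝ):ℂ))⁻¹) * ∫ y : ℝ, φ y from by ring,
      inv_mul_cancel₀ hC0, mul_inv_cancel₀ h2πC, one_mul, one_mul]
  rw [hfin, hC, mul_inv, inv_inv]
  push_cast
  ring

lemma myMain {ρ : ℝ} (hρ : 1 < ρ) {z : ℂ} (hz : 0 < z.im) :
    ∫ t : ℝ, (Real.sin t : ℂ) / ((t : ℂ) - z) ^ ((ρ:ℝ) : ℂ) =
      (π : ℂ) * Complex.exp ((π : ℂ) * Complex.I * (((ρ:ℝ):ℂ) - 1) / 2) /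
        Complex.Gamma ((ρ:ℝ) : ℂ) * Complex.exp (Complex.I * z) := by
  have hΓ : Complex.Gamma (ρ:ℂ) ≠ 0 := by
    apply Complex.Gamma_ne_zero
    intro m h
    have := congrArg Complex.re h
    simp at this
    have hm : (0:ℝ) ≤ m := Nat.cast_nonneg m
    linarith
  have him : ∀ t : ℝ, ((t:ℂ) - z).im ≠ 0 := fun t => by
    simpa using ne_of_gt hz
  have hcont : Continuous (fun t : ℝ => ((t:ℂ) - z) ^ (-(ρ:ℂ))) := by
    rw [continuous_iff_continuousAt]
    intro t
    have h1 : ContinuousAt (fun w : ℂ => w ^ (-(ρ:ℂ))) ((t:ℂ) - z) :=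
      continuousAt_cpow_const (Complex.mem_slitPlane_iff.2 (Or.inr (him t)))
    exact ContinuousAt.comp (x := t) (g := fun w : ℂ => w ^ (-(ρ:ℂ)))
      (f := fun x : ℝ => (x:ℂ) - z) h1
      ((Complex.continuous_ofReal.sub continuous_const).continuousAt)
  have hives : ∀ v : ℝ, Integrable
      (fun t : ℝ => Complex.exp (Complex.I * v * t) * ((t:ℂ) - z) ^ (-(ρ:ℂ))) := by
    intro v
    refine ((myIntegrableCpow hρ (ne_of_gt hz)).norm).mono' ?_ ?_
    · exact ((Complex.continuous_exp.comp (by fun_prop)).mul hcont).aestronglyMeasurable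
    · filter_upwards with t
      rw [norm_mul, Complex.norm_exp]
      have : (Complex.I * v * t).re = 0 := by simp
      rw [this, Real.exp_zero, one_mul]
  have hrw : (fun t : ℝ => (Real.sin t : ℂ) / ((t:ℂ) - z) ^ ((ρ:ℝ):ℂ))
      = fun t : ℝ => (Complex.I/2) *
          (Complex.exp (Complex.I * ((-1:ℝ):ℂ) * t) * ((t:ℂ) - z) ^ (-(ρ:ℂ)))
        - (Complex.I/2) *
          (Complex.exp (Complex.I * ((1:ℝ):ℂ) * t) * ((t:ℂ) - z) ^ (-(ρ:ℂ))) := by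
    funext t
    rw [Complex.ofReal_sin, Complex.sin, Complex.cpow_neg, div_eq_mul_inv]
    rw [show Complex.I * ((-1:ℝ):ℂ) * t = -(t:ℂ) * Complex.I by push_cast; ring,
      show Complex.I * ((1:ℝ):ℂ) * t = (t:ℂ) * Complex.I by push_cast; ring]
    ring
  have h1 := myKey_s12 hρ hz 1 myg_contAt_one
  have hm1 := myKey_s12 hρ hz (-1) myg_contAt_negone
  have hg1 : myg ρ z 1 = Complex.exp (Complex.I * z) := by
    rw [myg, Set.indicator_of_mem (by norm_num : (1:ℝ) ∈ Ioi 0)]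
    norm_num
  have hgm1 : myg ρ z (-1) = 0 := by
    rw [myg, Set.indicator_of_notMem (by norm_num : ¬((-1:ℝ) ∈ Ioi 0))]
  rw [hg1] at h1
  rw [hgm1, mul_zero] at hm1
  rw [hrw, integral_sub ((hives _).const_mul _) ((hives _).const_mul _),
    MeasureTheory.integral_const_mul, MeasureTheory.integral_const_mul, h1, hm1, mul_zero,
    zero_sub]
  -- now pure algebra with exponentials
  have key2 : Complex.I ^ ((ρ:ℂ)) = Complex.exp ((π:ℂ)/2 * Complex.I * ρ) := by
    rw [Complex.cpow_def_of_ne_zero Complex.I_ne_zero, Complex.log_I]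
  have hIexp : Complex.I = Complex.exp ((π:ℂ)/2 * Complex.I) := by
    rw [show ((π:ℂ)/2) = ((π/2 : ℝ) : ℂ) by push_cast; ring, Complex.exp_mul_I,
      ← Complex.ofReal_cos, ← Complex.ofReal_sin, Real.cos_pi_div_two, Real.sin_pi_div_two]
    simp
  have key3 : Complex.I * Complex.I ^ ((ρ:ℂ))
      = -Complex.exp ((π:ℂ) * Complex.I * ((ρ:ℂ) - 1)/2) := by
    rw [key2]
    nth_rewrite 1 [hIexp]
    rw [← Complex.exp_add,
      show (π:ℂ)/2 * Complex.I + (π:ℂ)/2 * Complex.I * ρ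
        = (π:ℂ) * Complex.I * ((ρ:ℂ) - 1)/2 + (π:ℂ) * Complex.I by ring,
      Complex.exp_add, Complex.exp_pi_mul_I]
    ring
  linear_combination (-(π:ℂ) * Complex.exp (Complex.I * z) / Complex.Gamma ((ρ:ℝ):ℂ)) * key3

theorem integral_sin_div_pow (ρ : ℝ) (hρ : 1 < ρ) (z : ℂ) (hz : z.im ≠ 0) :
    (0 < z.im → ∫ t : ℝ, (Real.sin t : ℂ) / ((t : ℂ) - z) ^ (ρ : ℂ) =
      (π : ℂ) * Complex.exp ((π : ℂ) * Complex.I * ((ρ : ℂ) - 1) / 2) / Complex.Gamma (ρ : ℂ) *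
        Complex.exp (Complex.I * z)) ∧
    (z.im < 0 → ∫ t : ℝ, (Real.sin t : ℂ) / ((t : ℂ) - z) ^ (ρ : ℂ) =
      (π : ℂ) * Complex.exp (-((π : ℂ) * Complex.I * ((ρ : ℂ) - 1) / 2)) / Complex.Gamma (ρ : ℂ) *
        Complex.exp (-(Complex.I * z))) := by
  constructor
  · intro him
    exact myMain hρ him
  · intro him
    have him' : 0 < ((starRingEnd ℂ) z).im := by
      rw [Complex.conj_im]
      linarith
  -- conjugate the upper half-plane result
    have h := myMain hρ him'
    have hint : ∀ t : ℝ, (starRingEnd ℂ)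
        ((Real.sin t : ℂ) / ((t:ℂ) - (starRingEnd ℂ) z) ^ ((ρ:ℝ):ℂ))
        = (Real.sin t : ℂ) / ((t:ℂ) - z) ^ ((ρ:ℝ):ℂ) := by
      intro t
      rw [map_div₀, Complex.conj_ofReal]
      congr 1
      have harg : ((t:ℂ) - (starRingEnd ℂ) z).arg ≠ π := by
        intro hπ
        have h2 := (Complex.arg_eq_pi_iff.1 hπ).2
        simp only [Complex.sub_im, Complex.ofReal_im, Complex.conj_im, zero_sub, neg_neg] at h2
        linarith
      calc (starRingEnd ℂ) (((t:ℂ) - (starRingEnd ℂ) z) ^ ((ρ:ℝ):ℂ))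
          = (starRingEnd ℂ) (((t:ℂ) - (starRingEnd ℂ) z) ^ ((starRingEnd ℂ) ((ρ:ℝ):ℂ))) := by
            rw [Complex.conj_ofReal]
        _ = (starRingEnd ℂ) ((t:ℂ) - (starRingEnd ℂ) z) ^ ((ρ:ℝ):ℂ) :=
            (Complex.conj_cpow _ _ harg).symm
        _ = ((t:ℂ) - z) ^ ((ρ:ℝ):ℂ) := by rw [map_sub, Complex.conj_ofReal, Complex.conj_conj]
    calc ∫ t : ℝ, (Real.sin t : ℂ) / ((t:ℂ) - z) ^ ((ρ:ℝ):ℂ)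
        = (starRingEnd ℂ) (∫ t : ℝ, (Real.sin t : ℂ) / ((t:ℂ) - (starRingEnd ℂ) z) ^ ((ρ:ℝ):ℂ)) := by
          rw [← integral_conj]
          congr 1
          funext t
          exact (hint t).symm
      _ = (starRingEnd ℂ) ((π : ℂ) * Complex.exp ((π : ℂ) * Complex.I * (((ρ:ℝ):ℂ) - 1) / 2) /
            Complex.Gamma ((ρ:ℝ):ℂ) * Complex.exp (Complex.I * (starRingEnd ℂ) z)) := by rw [h]
      _ = (π : ℂ) * Complex.exp (-((π : ℂ) * Complex.I * ((ρ:ℂ) - 1) / 2)) /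
            Complex.Gamma (ρ:ℂ) * Complex.exp (-(Complex.I * z)) := by
          rw [map_mul, map_div₀, map_mul, ← Complex.exp_conj, ← Complex.exp_conj,
            Complex.conj_ofReal]
          rw [show (starRingEnd ℂ) ((π:ℂ) * Complex.I * (((ρ:ℝ):ℂ) - 1)/2)
              = -((π:ℂ) * Complex.I * ((ρ:ℂ) - 1)/2) by
            simp [map_div₀, map_ofNat, Complex.conj_ofReal]; ring]
          rw [show (starRingEnd ℂ) (Complex.I * (starRingEnd ℂ) z) = -(Complex.I * z) by
            rw [map_mul, Complex.conj_conj, Complex.conj_I]; ring]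
          rw [← Complex.Gamma_conj, Complex.conj_ofReal]


end IntegralSinDivPow
end
end
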